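/- arXiv:1703.03088 — 4 statements merged into one kernel-verified Lean document; each statement's English description precedes it below -/
import Mathlib

section
/- Let λ be a partition with n parts. Given any fixed list of column sets (a sequence of subsets of {1,...,n} whose sizes are weakly decreasing and compatible with λ, i.e., the i-th column set has size equal to the number of parts of λ that are at least i), there exists exactly one coinversion-free augmented filling of shape λ with basement w0 = (n,...,2,1) whose i-th column (excluding the basement) has entries equal to the i-th column set. -/
namespace Paper

/-! ## Augmented fillings, triples, major index (HHL model) -/

/-- Tie-broken strict order on (value, subscript) pairs: equal values are
ordered by subscript. -/
def tlt (x y : ℕ × ℕ) : Prop := x.1 < y.1 ∨ (x.1 = y.1 ∧ x.2 < y.2)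

/-- `cyc x y z`: the three tie-broken values, read increasingly, follow the
cyclic order x → y → z. -/
def cyc (x y z : ℕ × ℕ) : Prop :=
  (tlt x y ∧ tlt y z) ∨ (tlt y z ∧ tlt z x) ∨ (tlt z x ∧ tlt x y)

variable {n : ℕ}

/-- A type A triple: `a = (r, j-1)`, `b = (r, j)`, `c = (r', j)` with `r'` below `r`
and the row of `a, b` at least as long as that of `c`. -/
def typeA (α : Fin n → ℕ) (r r' : Fin n) (j : ℕ) : Prop :=
  r < r' ∧ 1 ≤ j ∧ j ≤ α r ∧ j ≤ α r' ∧ α r' ≤ α r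

/-- A type B triple: `a = (r, j-1)`, `b = (r, j)`, `c = (r', j-1)` with `r'` above `r`
and the row of `a, b` strictly longer than that of `c`. -/
def typeB (α : Fin n → ℕ) (r r' : Fin n) (j : ℕ) : Prop :=
  r' < r ∧ 1 ≤ j ∧ j ≤ α r ∧ j - 1 ≤ α r' ∧ α r' < α r

/-- A type A triple is an inversion triple if the entries ordered increasingly
(with subscripts a₃, b₁, c₂ breaking ties) follow the counterclockwise cycle b → a → c. -/
def invA (F : Fin n → ℕ → ℕ) (r r' : Fin n) (j : ℕ) : Prop :=
  cyc (F r j, 1) (F r (j-1), 3) (F r' j, 2)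

/-- A type B triple is an inversion triple if the entries ordered increasingly
(with subscripts c₂, a₃, b₁ breaking ties) follow the clockwise cycle c → b → a. -/
def invB (F : Fin n → ℕ → ℕ) (r r' : Fin n) (j : ℕ) : Prop :=
  cyc (F r' (j-1), 2) (F r j, 1) (F r (j-1), 3)

/-- Coinversion-free: every type A and type B triple is an inversion triple. -/
def CoinvFree (α : Fin n → ℕ) (F : Fin n → ℕ → ℕ) : Prop :=
  (∀ r r' j, typeA α r r' j → invA F r r' j) ∧
  (∀ r r' j, typeB α r r' j → invB F r r' j)

/-- Inversion-free: no type A or type B triple is an inversion triple. -/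
def InvFree (α : Fin n → ℕ) (F : Fin n → ℕ → ℕ) : Prop :=
  (∀ r r' j, typeA α r r' j → ¬ invA F r r' j) ∧
  (∀ r r' j, typeB α r r' j → ¬ invB F r r' j)

/-- The major index: the sum of `leg(u) + 1` over all descents `u`
(non-basement boxes whose entry strictly exceeds that of their left neighbour). -/
def maj (α : Fin n → ℕ) (F : Fin n → ℕ → ℕ) : ℕ :=
  ∑ i : Fin n, ∑ j ∈ Finset.Icc 1 (α i), if F i (j-1) < F i j then α i - j + 1 else 0

/-- The non-basement part of a filling of shape `α`, with entries encoded as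
`Fin n` (representing the values `1, …, n`). -/
abbrev Fill (n : ℕ) (α : Fin n → ℕ) := (i : Fin n) → Fin (α i) → Fin n

/-- The entry of the augmented filling at row `i`, column `j`; column `0` is
the basement `σ`, and column `j ≥ 1` holds the value `G i (j-1) + 1 ∈ {1, …, n}`. -/
def entry (α : Fin n → ℕ) (σ : Fin n → ℕ) (G : Fill n α) : Fin n → ℕ → ℕ :=
  fun i j => if j = 0 then σ i else if h : j - 1 < α i then ((G i ⟨j - 1, h⟩ : ℕ) + 1) else 0

/-- The key basement `w₀ = (n, n-1, …, 1)`, read top to bottom. -/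
def keyBasement (n : ℕ) : Fin n → ℕ := fun i => n - (i : ℕ)

/-- The reversal on `Fin n` (0-indexed version of `i ↦ n + 1 - i`). -/
def revFin {n : ℕ} (k : Fin n) : Fin n := ⟨n - 1 - (k : ℕ), by have := k.isLt; omega⟩

/-- The set of entries of the `j`-th (non-basement, `j ≥ 1`) column. -/
def colFinset (α : Fin n → ℕ) (σ : Fin n → ℕ) (G : Fill n α) (j : ℕ) : Finset ℕ :=
  (Finset.univ.filter (fun i : Fin n => j ≤ α i)).image (fun i => entry α σ G i j)

/-- The multiset of entries of the `j`-th (non-basement, `j ≥ 1`) column. -/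
def colMultiset (α : Fin n → ℕ) (σ : Fin n → ℕ) (G : Fill n α) (j : ℕ) : Multiset ℕ :=
  (Finset.univ.filter (fun i : Fin n => j ≤ α i)).val.map (fun i => entry α σ G i j)

/-- The multiset of all non-basement entries (the weight of the filling). -/
def allEntries (α : Fin n → ℕ) (G : Fill n α) : Multiset ℕ :=
  ∑ i : Fin n, ((Finset.univ : Finset (Fin (α i))).val.map (fun j => (G i j : ℕ) + 1))

/-- The largest part of `α`. -/
def maxPart (α : Fin n → ℕ) : ℕ := Finset.univ.sup α

/-- The down-increasing condition on a column with entries `d` (top), `e` (middle),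
`f` (bottom): `e > d > f` or `d > f > e` or `f > e > d`. -/
def downInc (d e f : ℕ) : Prop := (f < d ∧ d < e) ∨ (e < f ∧ f < d) ∨ (d < e ∧ e < f)

/-! ## Generating polynomials; the variables `x_1, x_2, …` are indexed by `ℕ`,
and `q` is the variable of the coefficient ring `ℤ[q]`. -/

/-- The monomial `x^F` of a filling. -/
noncomputable def xwt (α : Fin n → ℕ) (G : Fill n α) : MvPolynomial ℕ (Polynomial ℤ) :=
  ∏ i : Fin n, ∏ j : Fin (α i), MvPolynomial.X ((G i j : ℕ) + 1)

open Classical in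
/-- `E^σ_α(x; q, 0) = Σ_{F coinversion-free} q^{maj F} x^F`. -/
noncomputable def Epoly (α σ : Fin n → ℕ) : MvPolynomial ℕ (Polynomial ℤ) :=
  ∑ G : Fill n α, if CoinvFree α (entry α σ G) then
    MvPolynomial.C (Polynomial.X ^ maj α (entry α σ G)) * xwt α G else 0

open Classical in
/-- `H̃^σ_α(x; q, 0) = Σ_{F inversion-free} q^{maj F} x^F`. -/
noncomputable def Hpoly (α σ : Fin n → ℕ) : MvPolynomial ℕ (Polynomial ℤ) :=
  ∑ G : Fill n α, if InvFree α (entry α σ G) then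
    MvPolynomial.C (Polynomial.X ^ maj α (entry α σ G)) * xwt α G else 0

/-! ## Tableaux and Schur polynomials -/

/-- A filling of the diagram of `ν` with entries in `Fin N` (values `1, …, N`). -/
abbrev Tab (m : ℕ) (ν : Fin m → ℕ) (N : ℕ) := (i : Fin m) → Fin (ν i) → Fin N

/-- Semistandardness: rows weakly increase, columns strictly increase. -/
def IsSSYT {m N : ℕ} (ν : Fin m → ℕ) (T : Tab m ν N) : Prop :=
  (∀ i : Fin m, ∀ j j' : Fin (ν i), j ≤ j' → T i j ≤ T i j') ∧
  (∀ i i' : Fin m, i < i' → ∀ j : Fin (ν i'), ∀ hj : (j : ℕ) < ν i, T i ⟨j, hj⟩ < T i' j)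

/-- Number of occurrences of the value `v` in the tableau. -/
def tabCount {m N : ℕ} (ν : Fin m → ℕ) (T : Tab m ν N) (v : Fin N) : ℕ :=
  ∑ i : Fin m, (Finset.univ.filter (fun j : Fin (ν i) => T i j = v)).card

/-- The monomial `x^T` of a tableau. -/
noncomputable def xwtTab {m N : ℕ} (ν : Fin m → ℕ) (T : Tab m ν N) :
    MvPolynomial ℕ (Polynomial ℤ) :=
  ∏ i : Fin m, ∏ j : Fin (ν i), MvPolynomial.X ((T i j : ℕ) + 1)

open Classical in
/-- The Schur polynomial `s_ν(x_1, …, x_N)` as the generating function of SSYT. -/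
noncomputable def schurPoly (m : ℕ) (ν : Fin m → ℕ) (N : ℕ) : MvPolynomial ℕ (Polynomial ℤ) :=
  ∑ T : Tab m ν N, if IsSSYT ν T then xwtTab ν T else 0

/-- The reading word of a tableau: rows left to right, bottom row first. -/
def readingWord {m N : ℕ} (ν : Fin m → ℕ) (T : Tab m ν N) : List ℕ :=
  ((List.finRange m).reverse).flatMap
    (fun i => (List.finRange (ν i)).map (fun j => (T i j : ℕ) + 1))

/-- The conjugate shape: `ν'_j = #{i : ν_i ≥ j}`. -/
def conjShape (m : ℕ) (ν : Fin m → ℕ) : Fin m → ℕ :=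
  fun j => (Finset.univ.filter (fun i => (j : ℕ) + 1 ≤ ν i)).card

/-! ## Charge and cocharge of words -/

/-- Minimum of a list, if nonempty. -/
def listMin : List ℕ → Option ℕ
  | [] => none
  | a :: t => match listMin t with
    | none => some a
    | some b => some (min a b)

/-- The major index of a list: the sum of the (1-indexed) positions of descents. -/
def majList (l : List ℕ) : ℕ :=
  (List.range (l.length - 1)).foldl
    (fun acc i => if l.getD (i+1) 0 < l.getD i 0 then acc + i + 1 else acc) 0

/-- The inverse of a word `w` that is a permutation of `1, …, k`:
its `v`-th letter is the (1-indexed) position of `v` in `w`. -/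
def invPerm (w : List ℕ) : List ℕ :=
  (List.range w.length).map (fun v => w.idxOf (v+1) + 1)

/-- Charge of a permutation word: `maj(reverse(w⁻¹))`. -/
def chargePerm (w : List ℕ) : ℕ := majList (invPerm w).reverse

/-- Cocharge of a permutation word: the binomial maximum minus the charge. -/
def cochargePerm (w : List ℕ) : ℕ := w.length.choose 2 - chargePerm w

/-- Largest index `< p` where `w` has the letter `t`. -/
def findBelow (w : List ℕ) (p t : ℕ) : Option ℕ :=
  ((List.range p).filter (fun i => w.getD i 0 == t)).getLast?

/-- Largest index where `w` has the letter `t` (used for wrap-around). -/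
def findAny (w : List ℕ) (t : ℕ) : Option ℕ :=
  ((List.range w.length).filter (fun i => w.getD i 0 == t)).getLast?

/-- Extraction scan: from position `p`, scanning right to left (wrapping around if
necessary) find the letter `t`, then continue with the next larger letter value. -/
def extractGo (w : List ℕ) : ℕ → ℕ → ℕ → List ℕ → List ℕ
  | 0, _, _, acc => acc
  | fuel+1, p, t, acc =>
    match (match findBelow w p t with | some i => some i | none => findAny w t) with
    | none => acc
    | some i =>
      match listMin (w.filter (fun x => decide (t < x))) with
      | none => i :: acc
      | some t' => extractGo w fuel i t' (i :: acc)

/-- Indices of the first standard subword of `w` (rightmost occurrence of the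
smallest letter, then the right-to-left wrap-around scan up to the largest letter). -/
def extractIndices (w : List ℕ) : List ℕ :=
  match listMin w with
  | none => []
  | some v0 => extractGo w w.length w.length v0 []

/-- The standard subword decomposition of a word (with fuel). -/
def subwordsGo : ℕ → List ℕ → List (List ℕ)
  | 0, _ => []
  | fuel+1, w =>
    if w.isEmpty then [] else
    let I := extractIndices w
    let sub := ((List.range w.length).filter (fun i => I.contains i)).map (fun i => w.getD i 0)
    let rest := ((List.range w.length).filter (fun i => !(I.contains i))).map (fun i => w.getD i 0)
    sub :: subwordsGo fuel rest

/-- The standard subwords of a word. -/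
def subwords (w : List ℕ) : List (List ℕ) := subwordsGo w.length w

/-- Charge of a word: the sum of the charges of its standard subwords. -/
def chargeWord (w : List ℕ) : ℕ := ((subwords w).map chargePerm).sum

/-- Cocharge of a word: the sum of the cocharges of its standard subwords. -/
def cochargeWord (w : List ℕ) : ℕ := ((subwords w).map cochargePerm).sum

/-- The charge word `cw(F)`: list the entries in increasing order (ties broken by
increasing column index) and record their column indices. -/
def cw (α σ : Fin n → ℕ) (G : Fill n α) : List ℕ :=
  (List.range n).flatMap (fun v =>
    (List.range (maxPart α)).filterMap (fun j =>
      if ∃ i : Fin n, j + 1 ≤ α i ∧ entry α σ G i (j+1) = v + 1 then some (j+1) else none))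

/-- The cocharge word `ccw(F)`: list the entries in decreasing order (ties broken by
increasing column index, with multiplicity) and record their column indices. -/
def ccw (α σ : Fin n → ℕ) (G : Fill n α) : List ℕ :=
  ((List.range n).reverse).flatMap (fun v =>
    (List.range (maxPart α)).flatMap (fun j =>
      List.replicate ((Finset.univ.filter
        (fun i : Fin n => j + 1 ≤ α i ∧ entry α σ G i (j+1) = v + 1)).card) (j+1)))

/-! ## Two-row fillings as lists (including the basement at index 0) -/

/-- The entry function of a two-row filling with top row `T` and bottom row `B`
(both including their basement entry at index 0). -/
def twoRowEntry (T B : List ℕ) : Fin 2 → ℕ → ℕ :=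
  fun i j => if i.val = 0 then T.getD j 0 else B.getD j 0

/-- The multiset of entries in column `j` of a two-row filling. -/
def colM (T B : List ℕ) (j : ℕ) : Multiset ℕ :=
  (if j < T.length then {T.getD j 0} else 0) + (if j < B.length then {B.getD j 0} else 0)

/-- The filling rule at a two-entry column `{A, B}` with bottom reference entry `C`,
returning (bottom entry, top entry): the least entry greater than `C` goes to the
bottom if one exists, otherwise the smallest entry goes to the bottom. -/
def phiRule (C A B : ℕ) : ℕ × ℕ :=
  if C < A ∧ C < B then (min A B, max A B)
  else if C < A then (A, B)
  else if C < B then (B, A)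
  else (min A B, max A B)

/-- Process the two-entry columns right to left (input and output reversed),
threading the current bottom reference entry `C`. -/
def phiPairs : List (ℕ × ℕ) → ℕ → List (ℕ × ℕ)
  | [], _ => []
  | (A, B) :: r, C =>
    let q := phiRule C A B
    q :: phiPairs r q.1

/-- The filling-rule map `φ` on a two-row filling with rows `T` (long, incl. basement)
and `B` (short, incl. basement): single-entry columns go to the bottom row, two-entry
columns are resolved by `phiRule`, processing right to left.
Returns (new long bottom row, new short top row). -/
def phi (T B : List ℕ) : List ℕ × List ℕ :=
  let k := B.length
  let tail := T.drop k
  let C0 := T.getD k 0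
  let res := (phiPairs ((T.take k).zip B).reverse C0).reverse
  (res.map Prod.fst ++ tail, res.map Prod.snd)



def cond3 (a b c : ℕ) : Prop :=
  (b ≤ a ∧ a < c) ∨ (a < c ∧ c < b) ∨ (c < b ∧ b ≤ a)

/-- greedy pick -/
noncomputable def pick (S : Finset ℕ) (a : ℕ) : ℕ :=
  if h : (S.filter (fun x => x ≤ a)).Nonempty then (S.filter (fun x => x ≤ a)).max' h
  else if h2 : S.Nonempty then S.max' h2 else 0

lemma pick_eq_pos {S : Finset ℕ} {a : ℕ} (h : (S.filter (fun x => x ≤ a)).Nonempty) :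
    pick S a = (S.filter (fun x => x ≤ a)).max' h := dif_pos h

lemma pick_eq_neg {S : Finset ℕ} {a : ℕ} (h : ¬ (S.filter (fun x => x ≤ a)).Nonempty)
    (h2 : S.Nonempty) : pick S a = S.max' h2 := by
  unfold pick; rw [dif_neg h, dif_pos h2]

lemma pick_mem {S : Finset ℕ} (h : S.Nonempty) (a : ℕ) : pick S a ∈ S := by
  by_cases hf : (S.filter (fun x => x ≤ a)).Nonempty
  · rw [pick_eq_pos hf]
    exact (Finset.mem_filter.mp ((S.filter (fun x => x ≤ a)).max'_mem hf)).1
  · rw [pick_eq_neg hf h]; exact S.max'_mem h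

lemma pick_cond {S : Finset ℕ} (hne : S.Nonempty) (a : ℕ) {c : ℕ} (hc : c ∈ S)
    (hne' : c ≠ pick S a) : cond3 a (pick S a) c := by
  by_cases hf : (S.filter (fun x => x ≤ a)).Nonempty
  · rw [pick_eq_pos hf] at hne' ⊢
    have hb := (S.filter (fun x => x ≤ a)).max'_mem hf
    have hba : (S.filter (fun x => x ≤ a)).max' hf ≤ a := (Finset.mem_filter.mp hb).2
    rcases le_or_gt c a with hca | hca
    · have : c ≤ (S.filter (fun x => x ≤ a)).max' hf :=
        Finset.le_max' (S.filter (fun x => x ≤ a)) c (Finset.mem_filter.mpr ⟨hc, hca⟩)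
      unfold cond3; omega
    · unfold cond3; omega
  · rw [pick_eq_neg hf hne] at hne' ⊢
    have hb := S.max'_mem hne
    have hab : a < S.max' hne := by
      by_contra h
      exact hf ⟨_, Finset.mem_filter.mpr ⟨hb, by omega⟩⟩
    have hac : a < c := by
      by_contra h
      exact hf ⟨c, Finset.mem_filter.mpr ⟨hc, by omega⟩⟩
    have : c ≤ S.max' hne := Finset.le_max' _ c hc
    unfold cond3; omega

lemma pick_unique {S : Finset ℕ} (a : ℕ) {b0 : ℕ} (hb0 : b0 ∈ S)
    (h : ∀ c ∈ S, c ≠ b0 → cond3 a b0 c) : b0 = pick S a := by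
  have hne : S.Nonempty := ⟨b0, hb0⟩
  by_cases hf : (S.filter (fun x => x ≤ a)).Nonempty
  · rw [pick_eq_pos hf]
    set M := (S.filter (fun x => x ≤ a)).max' hf with hM
    have hMmem := (S.filter (fun x => x ≤ a)).max'_mem hf
    have hMS : M ∈ S := (Finset.mem_filter.mp hMmem).1
    have hMa : M ≤ a := (Finset.mem_filter.mp hMmem).2
    by_contra hne'
    have hc := h M hMS (fun e => hne' e.symm)
    rcases le_or_gt b0 a with hba | hba
    · have : b0 ≤ M :=
        Finset.le_max' (S.filter (fun x => x ≤ a)) b0 (Finset.mem_filter.mpr ⟨hb0, hba⟩)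
      unfold cond3 at hc; omega
    · unfold cond3 at hc; omega
  · rw [pick_eq_neg hf hne]
    have hab : a < b0 := by
      by_contra hcon
      exact hf ⟨b0, Finset.mem_filter.mpr ⟨hb0, by omega⟩⟩
    have hM := S.max'_mem hne
    by_contra hne'
    have hc := h _ hM (fun e => hne' e.symm)
    have : b0 ≤ S.max' hne := Finset.le_max' _ b0 hb0
    unfold cond3 at hc; omega

/-- greedy column filling: `m` rows, previous-column entries `a`, entry set `S`. -/
noncomputable def gcol : ℕ → (ℕ → ℕ) → Finset ℕ → (ℕ → ℕ)
  | 0, _, _ => fun _ => 0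
  | (m+1), a, S => fun r =>
      if r = 0 then pick S (a 0)
      else gcol m (fun k => a (k+1)) (S.erase (pick S (a 0))) (r-1)

/-- the conditions pinning down a column. -/
def Pcol (m : ℕ) (a : ℕ → ℕ) (S : Finset ℕ) (b : ℕ → ℕ) : Prop :=
  (∀ r, m ≤ r → b r = 0) ∧ (Finset.range m).image b = S ∧
  ∀ r r', r < r' → r' < m → cond3 (a r) (b r) (b r')

lemma gcol_spec : ∀ (m : ℕ) (a : ℕ → ℕ) (S : Finset ℕ), S.card = m →
    Pcol m a S (gcol m a S) := by
  intro m
  induction m with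
  | zero =>
    intro a S hS
    refine ⟨fun r _ => rfl, ?_, fun r r' h h' => by omega⟩
    simp [Finset.card_eq_zero.mp hS]
  | succ m ih =>
    intro a S hS
    have hne : S.Nonempty := Finset.card_pos.mp (by omega)
    set b0 := pick S (a 0) with hb0def
    have hb0 : b0 ∈ S := pick_mem hne (a 0)
    have hcard' : (S.erase b0).card = m := by
      rw [Finset.card_erase_of_mem hb0, hS]; omega
    obtain ⟨hpad, himg, hcond⟩ := ih (fun k => a (k+1)) (S.erase b0) hcard'
    refine ⟨?_, ?_, ?_⟩
    · intro r hr
      simp only [gcol]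
      rw [if_neg (by omega)]
      exact hpad (r-1) (by omega)
    · ext x
      simp only [Finset.mem_image, Finset.mem_range]
      constructor
      · rintro ⟨r, hr, rfl⟩
        simp only [gcol]
        split
        · exact hb0
        · next h0 =>
          have hm : gcol m (fun k => a (k+1)) (S.erase b0) (r-1)
              ∈ (Finset.range m).image (gcol m (fun k => a (k+1)) (S.erase b0)) :=
            Finset.mem_image.mpr ⟨r-1, Finset.mem_range.mpr (by omega), rfl⟩
          rw [himg] at hm
          exact Finset.mem_of_mem_erase hm
      · intro hx
        by_cases hxb : x = b0
        · refine ⟨0, by omega, ?_⟩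
          simp only [gcol, if_pos rfl]
          exact hxb.symm
        · have hm : x ∈ S.erase b0 := Finset.mem_erase.mpr ⟨hxb, hx⟩
          rw [← himg] at hm
          obtain ⟨r, hr, hrx⟩ := Finset.mem_image.mp hm
          rw [Finset.mem_range] at hr
          refine ⟨r+1, by omega, ?_⟩
          simp only [gcol, if_neg (Nat.succ_ne_zero r)]
          simpa using hrx
    · intro r r' hrr' hr'
      rcases Nat.eq_zero_or_pos r with rfl | hr0
      · simp only [gcol, if_pos rfl, if_neg (by omega : ¬ r' = 0)]
        have hcm : gcol m (fun k => a (k+1)) (S.erase b0) (r'-1)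
            ∈ (Finset.range m).image (gcol m (fun k => a (k+1)) (S.erase b0)) :=
          Finset.mem_image.mpr ⟨r'-1, Finset.mem_range.mpr (by omega), rfl⟩
        rw [himg] at hcm
        exact pick_cond hne (a 0) (Finset.mem_of_mem_erase hcm) (Finset.mem_erase.mp hcm).1
      · simp only [gcol, if_neg (by omega : ¬ r = 0), if_neg (by omega : ¬ r' = 0)]
        have := hcond (r-1) (r'-1) (by omega) (by omega)
        simpa [Nat.sub_add_cancel hr0] using this

lemma Pcol_unique : ∀ (m : ℕ) (a : ℕ → ℕ) (S : Finset ℕ), S.card = m →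
    ∀ b, Pcol m a S b → b = gcol m a S := by
  intro m
  induction m with
  | zero =>
    intro a S hS b ⟨hpad, _, _⟩
    funext r
    simp [gcol, hpad r (Nat.zero_le r)]
  | succ m ih =>
    intro a S hS b ⟨hpad, himg, hcond⟩
    have hne : S.Nonempty := Finset.card_pos.mp (by omega)
    have hb0S : b 0 ∈ S := by
      rw [← himg]; exact Finset.mem_image.mpr ⟨0, by simp, rfl⟩
    have hinj : Set.InjOn b (Finset.range (m+1)) := by
      apply Finset.injOn_of_card_image_eq
      rw [himg, hS, Finset.card_range]
    have hb0 : b 0 = pick S (a 0) := by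
      apply pick_unique (a 0) hb0S
      intro c hc hcb
      rw [← himg] at hc
      obtain ⟨r', hr', rfl⟩ := Finset.mem_image.mp hc
      have hr'0 : r' ≠ 0 := fun h => hcb (by rw [h])
      exact hcond 0 r' (by omega) (Finset.mem_range.mp hr')
    have himg'' : (Finset.range m).image (fun r => if r < m then b (r+1) else 0)
        = S.erase (b 0) := by
      ext x
      simp only [Finset.mem_image, Finset.mem_range, Finset.mem_erase]
      constructor
      · rintro ⟨r, hr, rfl⟩
        rw [if_pos hr]
        refine ⟨?_, ?_⟩
        · intro h
          have := hinj (Finset.mem_coe.mpr (Finset.mem_range.mpr (by omega)) :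
              (r+1:ℕ) ∈ (Finset.range (m+1) : Finset ℕ))
            (Finset.mem_coe.mpr (Finset.mem_range.mpr (by omega)) :
              (0:ℕ) ∈ (Finset.range (m+1) : Finset ℕ)) h
          omega
        · rw [← himg]
          exact Finset.mem_image.mpr ⟨r+1, Finset.mem_range.mpr (by omega), rfl⟩
      · rintro ⟨hxb, hx⟩
        rw [← himg] at hx
        obtain ⟨r, hr, rfl⟩ := Finset.mem_image.mp hx
        have hr0 : r ≠ 0 := fun h => hxb (by rw [h])
        rw [Finset.mem_range] at hr
        refine ⟨r-1, by omega, ?_⟩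
        rw [if_pos (by omega)]
        congr 1
        omega
    have hP'' : Pcol m (fun k => a (k+1)) (S.erase (b 0))
        (fun r => if r < m then b (r+1) else 0) := by
      refine ⟨fun r hr => by
        show (if r < m then b (r+1) else 0) = 0
        rw [if_neg (by omega)], himg'', ?_⟩
      intro r r' hrr' hr'
      show cond3 (a (r+1)) (if r < m then b (r+1) else 0) (if r' < m then b (r'+1) else 0)
      rw [if_pos (by omega : r < m), if_pos hr']
      exact hcond (r+1) (r'+1) (by omega) (by omega)
    have hcard' : (S.erase (b 0)).card = m := by
      rw [Finset.card_erase_of_mem hb0S, hS]; omega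
    have hrec := ih (fun k => a (k+1)) (S.erase (b 0)) hcard' _ hP''
    funext r
    have heq : (if r - 1 < m then b (r-1+1) else 0)
        = gcol m (fun k => a (k+1)) (S.erase (b 0)) (r-1) := congrFun hrec (r-1)
    simp only [gcol]
    split
    · next h => rw [h, hb0]
    · next h =>
      rw [← hb0]
      rcases lt_or_ge r (m+1) with hr | hr
      · rw [if_pos (by omega : r - 1 < m)] at heq
        rw [← heq]
        congr 1
        omega
      · rw [if_neg (by omega : ¬ r - 1 < m)] at heq
        rw [hpad r hr]
        exact heq

section Assembly

variable {n : ℕ}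

lemma invA_iff (F : Fin n → ℕ → ℕ) (r r' : Fin n) (j : ℕ) :
    invA F r r' j ↔ cond3 (F r (j-1)) (F r j) (F r' j) := by
  unfold invA cyc tlt cond3
  dsimp only
  omega

/-- number of rows of length at least `j` -/
def mrow (lam : Fin n → ℕ) (j : ℕ) : ℕ :=
  (Finset.univ.filter (fun i : Fin n => j ≤ lam i)).card

lemma mrow_le (lam : Fin n → ℕ) (j : ℕ) : mrow lam j ≤ n := by
  have h := Finset.card_filter_le (Finset.univ : Finset (Fin n)) (fun i => j ≤ lam i)
  simpa [mrow] using h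

lemma mrow_char {lam : Fin n → ℕ} (hlam : ∀ i j : Fin n, i ≤ j → lam j ≤ lam i)
    (j : ℕ) (i : Fin n) : j ≤ lam i ↔ i.val < mrow lam j := by
  constructor
  · intro h
    have hsub : Finset.Iic i ⊆ Finset.univ.filter (fun k : Fin n => j ≤ lam k) := by
      intro k hk
      simp only [Finset.mem_Iic] at hk
      simp only [Finset.mem_filter, Finset.mem_univ, true_and]
      exact le_trans h (hlam k i hk)
    have hle := Finset.card_le_card hsub
    rw [Fin.card_Iic] at hle
    unfold mrow
    omega
  · intro h
    by_contra hcon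
    have hsub : Finset.univ.filter (fun k : Fin n => j ≤ lam k) ⊆ Finset.Iio i := by
      intro k hk
      simp only [Finset.mem_filter, Finset.mem_univ, true_and] at hk
      simp only [Finset.mem_Iio]
      by_contra hki
      exact hcon (le_trans hk (hlam i k (le_of_not_gt hki)))
    have hle := Finset.card_le_card hsub
    rw [Fin.card_Iio] at hle
    unfold mrow at h
    omega

/-- the greedy filling, column by column -/
noncomputable def eFun (n : ℕ) (lam : Fin n → ℕ) (C : ℕ → Finset ℕ) : ℕ → ℕ → ℕ
  | 0 => fun i => n - i
  | (j+1) => gcol (mrow lam (j+1)) (eFun n lam C j) (C (j+1))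

/-- padded column function of a filling -/
def pcolF (lam : Fin n → ℕ) (G' : Fill n lam) (j : ℕ) : ℕ → ℕ :=
  fun r => if h : r < n then
    (if j ≤ lam ⟨r, h⟩ then entry lam (keyBasement n) G' ⟨r, h⟩ j else 0) else 0

lemma pcolF_eq {lam : Fin n → ℕ} (G' : Fill n lam) {j r : ℕ} (h : r < n)
    (hj : j ≤ lam ⟨r, h⟩) :
    pcolF lam G' j r = entry lam (keyBasement n) G' ⟨r, h⟩ j := by
  unfold pcolF
  rw [dif_pos h, if_pos hj]

lemma pcolF_fin {lam : Fin n → ℕ} (G' : Fill n lam) {j : ℕ} (i : Fin n)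
    (hj : j ≤ lam i) :
    pcolF lam G' j i.val = entry lam (keyBasement n) G' i j := by
  rw [pcolF_eq G' i.isLt (by rwa [Fin.eta])]

lemma entry_val {lam : Fin n → ℕ} (G : Fill n lam) (i : Fin n) (k : Fin (lam i)) :
    entry lam (keyBasement n) G i (k.val + 1) = (G i k : ℕ) + 1 := by
  unfold entry
  rw [if_neg (Nat.succ_ne_zero _), dif_pos (show k.val + 1 - 1 < lam i by
    have := k.isLt; omega)]
  simp

lemma colFinset_eq_image {lam : Fin n → ℕ} (hlam : ∀ i j : Fin n, i ≤ j → lam j ≤ lam i)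
    (G' : Fill n lam) (j : ℕ) :
    colFinset lam (keyBasement n) G' (j+1)
      = (Finset.range (mrow lam (j+1))).image (pcolF lam G' (j+1)) := by
  unfold colFinset
  ext x
  simp only [Finset.mem_image, Finset.mem_filter, Finset.mem_univ, true_and,
    Finset.mem_range]
  constructor
  · rintro ⟨i, hi, rfl⟩
    exact ⟨i.val, (mrow_char hlam _ _).mp hi, pcolF_fin G' i hi⟩
  · rintro ⟨r, hr, rfl⟩
    have hrn : r < n := lt_of_lt_of_le hr (mrow_le lam (j+1))
    have hj : j+1 ≤ lam ⟨r, hrn⟩ := (mrow_char hlam _ _).mpr hr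
    exact ⟨⟨r, hrn⟩, hj, (pcolF_eq G' hrn hj).symm⟩

lemma toPcol {lam : Fin n → ℕ} (hlam : ∀ i j : Fin n, i ≤ j → lam j ≤ lam i)
    {C : ℕ → Finset ℕ} (G' : Fill n lam)
    (hcf : CoinvFree lam (entry lam (keyBasement n) G'))
    (hcs : ∀ j, 1 ≤ j → colFinset lam (keyBasement n) G' j = C j) (j : ℕ) :
    Pcol (mrow lam (j+1)) (pcolF lam G' j) (C (j+1)) (pcolF lam G' (j+1)) := by
  refine ⟨?_, ?_, ?_⟩
  · intro r hr
    unfold pcolF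
    split
    · next h =>
      rw [if_neg]
      intro hj
      have h2 : r < mrow lam (j+1) := (mrow_char hlam (j+1) ⟨r, h⟩).mp hj
      omega
    · rfl
  · rw [← colFinset_eq_image hlam G' j]
    exact hcs (j+1) (by omega)
  · intro r r' hrr' hr'
    have hr : r < mrow lam (j+1) := lt_trans hrr' hr'
    have hrn : r < n := lt_of_lt_of_le hr (mrow_le lam _)
    have hr'n : r' < n := lt_of_lt_of_le hr' (mrow_le lam _)
    have hjr : j+1 ≤ lam ⟨r, hrn⟩ := (mrow_char hlam _ _).mpr hr
    have hjr' : j+1 ≤ lam ⟨r', hr'n⟩ := (mrow_char hlam _ _).mpr hr'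
    have htA : typeA lam ⟨r, hrn⟩ ⟨r', hr'n⟩ (j+1) :=
      ⟨by simp [Fin.lt_def]; omega, by omega, hjr, hjr',
        hlam ⟨r, hrn⟩ ⟨r', hr'n⟩ (by simp [Fin.le_def]; omega)⟩
    have hinv := hcf.1 _ _ _ htA
    rw [invA_iff] at hinv
    rw [pcolF_eq G' hrn (le_trans (by omega) hjr), pcolF_eq G' hrn hjr,
      pcolF_eq G' hr'n hjr']
    simpa using hinv

lemma fromPcol {lam : Fin n → ℕ} (hlam : ∀ i j : Fin n, i ≤ j → lam j ≤ lam i)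
    {C : ℕ → Finset ℕ}
    (hCcard : ∀ j, 1 ≤ j → (C j).card = mrow lam j) (G' : Fill n lam)
    (hP : ∀ j, Pcol (mrow lam (j+1)) (pcolF lam G' j) (C (j+1)) (pcolF lam G' (j+1))) :
    CoinvFree lam (entry lam (keyBasement n) G') ∧
      ∀ j, 1 ≤ j → colFinset lam (keyBasement n) G' j = C j := by
  constructor
  · constructor
    · intro r r' j ht
      obtain ⟨hrr', hj1, hjr, hjr', _⟩ := ht
      obtain ⟨j', rfl⟩ : ∃ j', j = j'+1 := ⟨j-1, by omega⟩
      rw [invA_iff]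
      have hr : r.val < mrow lam (j'+1) := (mrow_char hlam _ _).mp hjr
      have hr' : r'.val < mrow lam (j'+1) := (mrow_char hlam _ _).mp hjr'
      have hc := (hP j').2.2 r.val r'.val hrr' hr'
      rw [pcolF_fin G' r (le_trans (by omega) hjr), pcolF_fin G' r hjr,
        pcolF_fin G' r' hjr'] at hc
      simpa using hc
    · intro r r' j ht
      exfalso
      have := hlam r' r (le_of_lt ht.1)
      have := ht.2.2.2.2
      omega
  · intro j hj
    obtain ⟨j', rfl⟩ : ∃ j', j = j'+1 := ⟨j-1, by omega⟩
    rw [colFinset_eq_image hlam G' j']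
    exact (hP j').2.1

end Assembly

/-- For a partition shape and the key basement, any compatible list of column sets
is realized by exactly one coinversion-free filling. -/
theorem unique_coinvfree_filling_with_column_sets (n : ℕ) (lam : Fin n → ℕ)
    (hlam : ∀ i j : Fin n, i ≤ j → lam j ≤ lam i) (C : ℕ → Finset ℕ)
    (hCsub : ∀ j, 1 ≤ j → C j ⊆ Finset.Icc 1 n)
    (hCcard : ∀ j, 1 ≤ j →
      (C j).card = (Finset.univ.filter (fun i : Fin n => j ≤ lam i)).card) :
    ∃! G : Fill n lam, CoinvFree lam (entry lam (keyBasement n) G) ∧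
      ∀ j, 1 ≤ j → colFinset lam (keyBasement n) G j = C j := by
  classical
  have hCcard' : ∀ j, 1 ≤ j → (C j).card = mrow lam j := hCcard
  have hcard : ∀ j : ℕ, (C (j+1)).card = mrow lam (j+1) :=
    fun j => hCcard' (j+1) (by omega)
  have hPe : ∀ j : ℕ, Pcol (mrow lam (j+1)) (eFun n lam C j) (C (j+1))
      (eFun n lam C (j+1)) := fun j => gcol_spec _ _ _ (hcard j)
  have hbound' : ∀ j r, r < mrow lam (j+1) →
      1 ≤ eFun n lam C (j+1) r ∧ eFun n lam C (j+1) r ≤ n := by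
    intro j r hr
    have hmem : eFun n lam C (j+1) r ∈ C (j+1) := by
      rw [← (hPe j).2.1]
      exact Finset.mem_image.mpr ⟨r, Finset.mem_range.mpr hr, rfl⟩
    have := hCsub (j+1) (by omega) hmem
    simpa [Finset.mem_Icc] using this
  -- construct the filling
  set G : Fill n lam := fun i k =>
    ⟨eFun n lam C (k.val+1) i.val - 1, by
      have hk : (k.val+1) ≤ lam i := k.isLt
      have hr : i.val < mrow lam (k.val+1) := (mrow_char hlam _ _).mp hk
      have := hbound' k.val i.val hr
      omega⟩ with hGdef
  have hGent : ∀ (i : Fin n) (k : Fin (lam i)),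
      (G i k : ℕ) + 1 = eFun n lam C (k.val+1) i.val := by
    intro i k
    have hk : (k.val+1) ≤ lam i := k.isLt
    have hr : i.val < mrow lam (k.val+1) := (mrow_char hlam _ _).mp hk
    have hb := hbound' k.val i.val hr
    simp only [hGdef]
    omega
  have hGcol : ∀ j, pcolF lam G j = eFun n lam C j := by
    intro j
    funext r
    match j with
    | 0 =>
      show pcolF lam G 0 r = n - r
      unfold pcolF
      split
      · next h =>
        rw [if_pos (Nat.zero_le _)]
        unfold entry
        rw [if_pos rfl]
        rfl
      · next h => omega
    | (j+1) =>
      by_cases h : r < n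
      · by_cases hj : (j+1) ≤ lam ⟨r, h⟩
        · rw [pcolF_eq G h hj]
          have hk : ((⟨j, by omega⟩ : Fin (lam ⟨r, h⟩)) : ℕ) + 1 = j + 1 := rfl
          calc entry lam (keyBasement n) G ⟨r, h⟩ (j+1)
              = entry lam (keyBasement n) G ⟨r, h⟩
                  (((⟨j, by omega⟩ : Fin (lam ⟨r, h⟩)) : ℕ) + 1) := by rw [hk]
            _ = (G ⟨r, h⟩ ⟨j, by omega⟩ : ℕ) + 1 := entry_val G ⟨r, h⟩ _
            _ = eFun n lam C (j+1) r := hGent ⟨r, h⟩ ⟨j, by omega⟩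
        · have hr : ¬ r < mrow lam (j+1) :=
            fun hc => hj ((mrow_char hlam _ _).mpr hc)
          unfold pcolF
          rw [dif_pos h, if_neg hj]
          exact ((hPe j).1 r (by omega)).symm
      · have hr : ¬ r < mrow lam (j+1) := fun hc => h (lt_of_lt_of_le hc (mrow_le lam _))
        unfold pcolF
        rw [dif_neg h]
        exact ((hPe j).1 r (by omega)).symm
  refine ⟨G, ?_, ?_⟩
  · exact fromPcol hlam hCcard' G (fun j => by rw [hGcol j, hGcol (j+1)]; exact hPe j)
  · intro G' ⟨hcf, hcs⟩
    have hind : ∀ j, pcolF lam G' j = eFun n lam C j := by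
      intro j
      induction j with
      | zero =>
        funext r
        show pcolF lam G' 0 r = n - r
        unfold pcolF
        split
        · next h =>
          rw [if_pos (Nat.zero_le _)]
          unfold entry
          rw [if_pos rfl]
          rfl
        · next h => omega
      | succ j ih =>
        have hP := toPcol hlam G' hcf hcs j
        rw [ih] at hP
        exact Pcol_unique _ _ _ (hcard j) _ hP
    -- conclude G' = G
    funext i k
    apply Fin.ext
    have h1 : (G' i k : ℕ) + 1 = eFun n lam C (k.val+1) i.val := by
      rw [← hind (k.val+1), pcolF_fin G' i k.isLt]
      exact (entry_val G' i k).symm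
    have h2 := hGent i k
    omega

end Paper
end

section
/- The non-symmetric Macdonald polynomial specialization E_λ(x; q=1, t=0), defined as the generating function over coinversion-free fillings of partition shape λ with key basement w0 weighted by x^F (ignoring major index since q=1), equals the elementary symmetric function e_{λ'}(x_1,...,x_n), where λ' is the conjugate partition of λ. -/
namespace Paper

variable {n : ℕ}

/-! ### Auxiliary development for the main theorem -/

section Aux

/-- Cyclic distance used to linearize the inversion-triple condition. -/
def dd (n a x : ℕ) : ℕ := if x ≤ a then a - x else n + 1 + a - x

lemma dd_inj {n a b c : ℕ} (hb : b ≤ n) (hc : c ≤ n)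
    (h : dd n a b = dd n a c) : b = c := by
  unfold dd at h; split_ifs at h <;> omega

lemma cyc_iff_dd {n a b c : ℕ} (hb : b ≤ n) (hc : c ≤ n) :
    cyc (b,1) (a,3) (c,2) ↔ dd n a b < dd n a c := by
  unfold cyc tlt dd
  dsimp only
  split_ifs <;> omega

/-- The pairwise condition on a column `b` relative to the previous column `a`. -/
def Cond (n : ℕ) (R : Finset (Fin n)) (a b : Fin n → ℕ) : Prop :=
  ∀ r ∈ R, ∀ r' ∈ R, r < r' → dd n (a r) (b r) < dd n (a r) (b r')

lemma cond_injOn {n : ℕ} {R : Finset (Fin n)} {a b : Fin n → ℕ}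
    (h : Cond n R a b) : ∀ r ∈ R, ∀ r' ∈ R, b r = b r' → r = r' := by
  intro r hr r' hr' he
  by_contra hne
  rcases lt_or_gt_of_ne hne with hlt | hlt
  · have := h r hr r' hr' hlt; rw [he] at this; omega
  · have := h r' hr' r hr hlt; rw [he] at this; omega

lemma image_erase_of_cond {n : ℕ} {R : Finset (Fin n)} {a b : Fin n → ℕ}
    (h : Cond n R a b) {r0 : Fin n} (hr0 : r0 ∈ R) :
    (R.erase r0).image b = (R.image b).erase (b r0) := by
  ext y; constructor
  · intro hy; rcases Finset.mem_image.1 hy with ⟨s, hs, rfl⟩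
    refine Finset.mem_erase.2 ⟨?_, Finset.mem_image_of_mem _ (Finset.mem_of_mem_erase hs)⟩
    intro hc
    exact (Finset.mem_erase.1 hs).1 (cond_injOn h s (Finset.mem_of_mem_erase hs) r0 hr0 hc)
  · intro hy
    rcases Finset.mem_erase.1 hy with ⟨hyne, hy'⟩
    rcases Finset.mem_image.1 hy' with ⟨s, hs, rfl⟩
    exact Finset.mem_image_of_mem _ (Finset.mem_erase.2 ⟨fun hc => hyne (by rw [hc]), hs⟩)

lemma greedy_uniq {n : ℕ} :
    ∀ R : Finset (Fin n), ∀ a b b' : Fin n → ℕ,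
      Cond n R a b → Cond n R a b' → R.image b = R.image b' →
      ∀ r ∈ R, b r = b' r := by
  intro R
  induction R using Finset.strongInduction with
  | _ R ih =>
    intro a b b' hb hb' him r hr
    have hne : R.Nonempty := ⟨r, hr⟩
    set r0 := R.min' hne with hr0def
    have hr0R : r0 ∈ R := R.min'_mem hne
    have key : b r0 = b' r0 := by
      have h1 : b' r0 ∈ R.image b := by rw [him]; exact Finset.mem_image_of_mem _ hr0R
      rcases Finset.mem_image.1 h1 with ⟨s, hs, hsb⟩
      by_cases hsr : s = r0
      · rw [← hsb, hsr]
      · have hlt : r0 < s := lt_of_le_of_ne (R.min'_le s hs) (Ne.symm hsr)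
        have h2 := hb r0 hr0R s hs hlt
        rw [hsb] at h2
        have h1' : b r0 ∈ R.image b' := by rw [← him]; exact Finset.mem_image_of_mem _ hr0R
        rcases Finset.mem_image.1 h1' with ⟨t, ht, htb⟩
        by_cases htr : t = r0
        · rw [← htb, htr]
        · have hlt' : r0 < t := lt_of_le_of_ne (R.min'_le t ht) (Ne.symm htr)
          have h3 := hb' r0 hr0R t ht hlt'
          rw [htb] at h3
          omega
    by_cases hrr : r = r0
    · rw [hrr]; exact key
    · refine ih (R.erase r0) (Finset.erase_ssubset hr0R) a b b' ?_ ?_ ?_ r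
        (Finset.mem_erase.2 ⟨hrr, hr⟩)
      · intro s hs s' hs' hss
        exact hb s (Finset.mem_of_mem_erase hs) s' (Finset.mem_of_mem_erase hs') hss
      · intro s hs s' hs' hss
        exact hb' s (Finset.mem_of_mem_erase hs) s' (Finset.mem_of_mem_erase hs') hss
      · rw [image_erase_of_cond hb hr0R, image_erase_of_cond hb' hr0R, him, key]

lemma greedy_exists {n : ℕ} :
    ∀ R : Finset (Fin n), ∀ a : Fin n → ℕ, ∀ S : Finset ℕ,
      S.card = R.card → (∀ x ∈ S, x ≤ n) →
      ∃ b : Fin n → ℕ, Cond n R a b ∧ R.image b = S := by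
  intro R
  induction R using Finset.strongInduction with
  | _ R ih =>
    intro a S hcard hbound
    rcases R.eq_empty_or_nonempty with rfl | hne
    · have hS : S = ∅ := Finset.card_eq_zero.1 (by simpa using hcard)
      exact ⟨fun _ => 0, fun r hr => absurd hr (by simp), by simp [hS]⟩
    · set r0 := R.min' hne with hr0def
      have hr0R : r0 ∈ R := R.min'_mem hne
      have hSne : S.Nonempty := by
        rw [← Finset.card_pos, hcard]; exact Finset.card_pos.2 hne
      obtain ⟨x0, hx0S, hx0min⟩ := S.exists_min_image (dd n (a r0)) hSne
      obtain ⟨b, hb, him⟩ := ih (R.erase r0) (Finset.erase_ssubset hr0R) a (S.erase x0)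
        (by rw [Finset.card_erase_of_mem hx0S, Finset.card_erase_of_mem hr0R, hcard])
        (fun x hx => hbound x (Finset.mem_of_mem_erase hx))
      refine ⟨fun r => if r = r0 then x0 else b r, ?_, ?_⟩
      · intro s hs s' hs' hss
        have hs'ne : s' ≠ r0 := by
          intro hc; rw [hc] at hss
          exact absurd (R.min'_le s hs) (not_le.2 hss)
        by_cases hsr : s = r0
        · subst hsr
          simp only [if_pos rfl, if_neg hs'ne]
          have hbs' : b s' ∈ S.erase x0 := by
            rw [← him]; exact Finset.mem_image_of_mem _ (Finset.mem_erase.2 ⟨hs'ne, hs'⟩)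
          have h1 := hx0min (b s') (Finset.mem_of_mem_erase hbs')
          have h2 : b s' ≠ x0 := (Finset.mem_erase.1 hbs').1
          rcases lt_or_eq_of_le h1 with h | h
          · exact h
          · exact absurd (dd_inj (hbound x0 hx0S)
              (hbound _ (Finset.mem_of_mem_erase hbs')) h) (Ne.symm h2)
        · simp only [if_neg hsr, if_neg hs'ne]
          exact hb s (Finset.mem_erase.2 ⟨hsr, hs⟩) s' (Finset.mem_erase.2 ⟨hs'ne, hs'⟩) hss
      · rw [← Finset.insert_erase hr0R, Finset.image_insert]
        have hcongr : (R.erase r0).image (fun r => if r = r0 then x0 else b r)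
            = (R.erase r0).image b := by
          apply Finset.image_congr
          intro x hx
          simp only [if_neg (Finset.mem_erase.1 hx).1]
        rw [if_pos rfl, hcongr, him, Finset.insert_erase hx0S]

end Aux

section Fillings

/-- The rows whose length is at least `j`. -/
def rowsOf (n : ℕ) (lam : Fin n → ℕ) (j : ℕ) : Finset (Fin n) :=
  Finset.univ.filter (fun i => j ≤ lam i)

variable {n : ℕ}

lemma entry_zero (lam σ : Fin n → ℕ) (G : Fill n lam) (i : Fin n) :
    entry lam σ G i 0 = σ i := by simp [entry]

lemma entry_succ (lam σ : Fin n → ℕ) (G : Fill n lam) (i : Fin n) (k : ℕ) (h : k < lam i) :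
    entry lam σ G i (k+1) = (G i ⟨k, h⟩ : ℕ) + 1 := by
  simp [entry, Nat.add_sub_cancel, h]

lemma entry_le (lam : Fin n → ℕ) (G : Fill n lam) (i : Fin n) (j : ℕ) :
    entry lam (keyBasement n) G i j ≤ n := by
  unfold entry keyBasement
  split_ifs with h1 h2
  · omega
  · have := (G i ⟨j-1, h2⟩).isLt; omega
  · omega

lemma entry_mem_Icc (lam σ : Fin n → ℕ) (G : Fill n lam) (i : Fin n) (j : ℕ)
    (h1 : 1 ≤ j) (h2 : j ≤ lam i) :
    entry lam σ G i j ∈ Finset.Icc 1 n := by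
  have h : j - 1 < lam i := by omega
  unfold entry
  rw [if_neg (by omega), dif_pos h]
  have := (G i ⟨j-1, h⟩).isLt
  simp only [Finset.mem_Icc]
  omega

lemma coinvFree_iff (lam : Fin n → ℕ) (hlam : ∀ i j : Fin n, i ≤ j → lam j ≤ lam i)
    (F : Fin n → ℕ → ℕ) (hbd : ∀ i j, F i j ≤ n) :
    CoinvFree lam F ↔ ∀ r r' : Fin n, ∀ j : ℕ, r < r' → 1 ≤ j → j ≤ lam r' →
      dd n (F r (j-1)) (F r j) < dd n (F r (j-1)) (F r' j) := by
  constructor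
  · intro h r r' j hr h1 h2
    have hA : typeA lam r r' j :=
      ⟨hr, h1, le_trans h2 (hlam r r' hr.le), h2, hlam r r' hr.le⟩
    exact (cyc_iff_dd (hbd r j) (hbd r' j)).1 (h.1 r r' j hA)
  · intro h
    refine ⟨fun r r' j ht => ?_, fun r r' j ht => ?_⟩
    · exact (cyc_iff_dd (hbd r j) (hbd r' j)).2 (h r r' j ht.1 ht.2.1 ht.2.2.2.1)
    · exact absurd (hlam r' r ht.1.le) (not_le.2 ht.2.2.2.2)

lemma cond_of_coinvFree (lam : Fin n → ℕ) (hlam : ∀ i j : Fin n, i ≤ j → lam j ≤ lam i)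
    (F : Fin n → ℕ → ℕ) (hbd : ∀ i j, F i j ≤ n) (hcf : CoinvFree lam F)
    (j : ℕ) (hj : 1 ≤ j) :
    Cond n (rowsOf n lam j) (fun i => F i (j-1)) (fun i => F i j) := by
  intro r hr r' hr' hlt
  have h2 : j ≤ lam r' := (Finset.mem_filter.1 hr').2
  exact (coinvFree_iff lam hlam F hbd).1 hcf r r' j hlt hj h2

end Fillings
section Construction

/-- The greedy column filling, via choice. -/
noncomputable def greedyCol (n : ℕ) (a : Fin n → ℕ) (R : Finset (Fin n)) (S : Finset ℕ) :
    Fin n → ℕ :=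
  if h : S.card = R.card ∧ ∀ x ∈ S, x ≤ n then
    Classical.choose (greedy_exists R a S h.1 h.2)
  else fun _ => 0

lemma greedyCol_spec {n : ℕ} (a : Fin n → ℕ) (R : Finset (Fin n)) (S : Finset ℕ)
    (h1 : S.card = R.card) (h2 : ∀ x ∈ S, x ≤ n) :
    Cond n R a (greedyCol n a R S) ∧ R.image (greedyCol n a R S) = S := by
  unfold greedyCol
  rw [dif_pos (⟨h1, h2⟩ : S.card = R.card ∧ ∀ x ∈ S, x ≤ n)]
  exact Classical.choose_spec (greedy_exists R a S h1 h2)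

/-- The columns of the filling built from the prescribed column sets `p`. -/
noncomputable def colsOf (n : ℕ) (lam : Fin n → ℕ) (p : ℕ → Finset ℕ) : ℕ → Fin n → ℕ
  | 0 => keyBasement n
  | j+1 => greedyCol n (colsOf n lam p j) (rowsOf n lam (j+1)) (p (j+1))

/-- The filling built from the prescribed column sets `p`. -/
noncomputable def fillOf (n : ℕ) (lam : Fin n → ℕ) (p : ℕ → Finset ℕ) : Fill n lam :=
  fun i k => ⟨(colsOf n lam p ((k : ℕ)+1) i - 1) % n, Nat.mod_lt _ i.pos⟩

variable {n : ℕ} {lam : Fin n → ℕ} {p : ℕ → Finset ℕ}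

/-- The standing hypothesis on the column data. -/
def GoodCols (n : ℕ) (lam : Fin n → ℕ) (p : ℕ → Finset ℕ) : Prop :=
  ∀ j, 1 ≤ j → (p j).card = (rowsOf n lam j).card ∧ ∀ x ∈ p j, 1 ≤ x ∧ x ≤ n

lemma colsOf_image (hp : GoodCols n lam p) (j : ℕ) (hj : 1 ≤ j) :
    (rowsOf n lam j).image (colsOf n lam p j) = p j := by
  obtain ⟨k, rfl⟩ : ∃ k, j = k+1 := ⟨j-1, by omega⟩
  exact (greedyCol_spec (colsOf n lam p k) (rowsOf n lam (k+1)) (p (k+1))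
    (hp (k+1) (by omega)).1 (fun x hx => ((hp (k+1) (by omega)).2 x hx).2)).2

lemma colsOf_cond (hp : GoodCols n lam p) (j : ℕ) (hj : 1 ≤ j) :
    Cond n (rowsOf n lam j) (colsOf n lam p (j-1)) (colsOf n lam p j) := by
  obtain ⟨k, rfl⟩ : ∃ k, j = k+1 := ⟨j-1, by omega⟩
  exact (greedyCol_spec (colsOf n lam p k) (rowsOf n lam (k+1)) (p (k+1))
    (hp (k+1) (by omega)).1 (fun x hx => ((hp (k+1) (by omega)).2 x hx).2)).1

lemma colsOf_mem (hp : GoodCols n lam p) (j : ℕ) (hj : 1 ≤ j)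
    (i : Fin n) (hi : i ∈ rowsOf n lam j) :
    colsOf n lam p j i ∈ p j := by
  rw [← colsOf_image hp j hj]
  exact Finset.mem_image_of_mem _ hi

lemma entry_fillOf (hp : GoodCols n lam p) (j : ℕ) (i : Fin n) (hij : j ≤ lam i) :
    entry lam (keyBasement n) (fillOf n lam p) i j = colsOf n lam p j i := by
  match j with
  | 0 => rw [entry_zero]; rfl
  | k+1 =>
    rw [entry_succ lam _ _ i k (by omega)]
    have hmem := colsOf_mem hp (k+1) (by omega) i
      (Finset.mem_filter.2 ⟨Finset.mem_univ i, hij⟩)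
    have hb := (hp (k+1) (by omega)).2 _ hmem
    have h0 : 0 < n := i.pos
    show ((colsOf n lam p (k+1) i - 1) % n) + 1 = colsOf n lam p (k+1) i
    rw [Nat.mod_eq_of_lt (by omega)]
    omega

lemma coinvFree_fillOf (hlam : ∀ i j : Fin n, i ≤ j → lam j ≤ lam i)
    (hp : GoodCols n lam p) :
    CoinvFree lam (entry lam (keyBasement n) (fillOf n lam p)) := by
  rw [coinvFree_iff lam hlam _ (entry_le lam (fillOf n lam p))]
  intro r r' j hr h1 h2
  have hjr : j ≤ lam r := le_trans h2 (hlam r r' hr.le)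
  rw [entry_fillOf hp (j-1) r (by omega), entry_fillOf hp j r hjr,
      entry_fillOf hp j r' h2]
  exact colsOf_cond hp j h1 r (Finset.mem_filter.2 ⟨Finset.mem_univ r, hjr⟩)
    r' (Finset.mem_filter.2 ⟨Finset.mem_univ r', h2⟩) hr

lemma colFinset_fillOf (hp : GoodCols n lam p) (j : ℕ) (hj : 1 ≤ j) :
    colFinset lam (keyBasement n) (fillOf n lam p) j = p j := by
  rw [← colsOf_image hp j hj]
  unfold colFinset rowsOf
  apply Finset.image_congr
  intro i hi
  exact entry_fillOf hp j i (Finset.mem_filter.1 hi).2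

end Construction

section Uniqueness

variable {n : ℕ} {lam : Fin n → ℕ}

lemma fill_ext (hlam : ∀ i j : Fin n, i ≤ j → lam j ≤ lam i) (G G' : Fill n lam)
    (hG : CoinvFree lam (entry lam (keyBasement n) G))
    (hG' : CoinvFree lam (entry lam (keyBasement n) G'))
    (hcol : ∀ j, 1 ≤ j →
      colFinset lam (keyBasement n) G j = colFinset lam (keyBasement n) G' j) :
    G = G' := by
  have key : ∀ j, ∀ i ∈ rowsOf n lam j,
      entry lam (keyBasement n) G i j = entry lam (keyBasement n) G' i j := by
    intro j
    induction j with
    | zero => intro i _; rw [entry_zero, entry_zero]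
    | succ k ihk =>
      intro i hi
      refine greedy_uniq (rowsOf n lam (k+1))
        (fun i => entry lam (keyBasement n) G i k)
        (fun i => entry lam (keyBasement n) G i (k+1))
        (fun i => entry lam (keyBasement n) G' i (k+1)) ?_ ?_ ?_ i hi
      · exact cond_of_coinvFree lam hlam _ (entry_le lam G) hG (k+1) (by omega)
      · intro r hr r' hr' hlt
        have hc := cond_of_coinvFree lam hlam _ (entry_le lam G') hG' (k+1) (by omega)
          r hr r' hr' hlt
        have hrk : r ∈ rowsOf n lam k := by
          have := (Finset.mem_filter.1 hr).2
          exact Finset.mem_filter.2 ⟨Finset.mem_univ r, by omega⟩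
        have := ihk r hrk
        dsimp only at hc ⊢
        rw [this]
        exact hc
      · exact hcol (k+1) (by omega)
  funext i k
  have hik : i ∈ rowsOf n lam ((k : ℕ)+1) :=
    Finset.mem_filter.2 ⟨Finset.mem_univ i, k.isLt⟩
  have h := key ((k : ℕ)+1) i hik
  rw [entry_succ lam _ G i (k : ℕ) k.isLt, entry_succ lam _ G' i (k : ℕ) k.isLt] at h
  simp only [Fin.eta] at h
  exact Fin.ext (by omega)

lemma colFinset_card_of_coinvFree (hlam : ∀ i j : Fin n, i ≤ j → lam j ≤ lam i)
    (G : Fill n lam) (hG : CoinvFree lam (entry lam (keyBasement n) G))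
    (j : ℕ) (hj : 1 ≤ j) :
    (colFinset lam (keyBasement n) G j).card = (rowsOf n lam j).card := by
  apply Finset.card_image_of_injOn
  intro r hr r' hr' he
  exact cond_injOn (cond_of_coinvFree lam hlam _ (entry_le lam G) hG j hj)
    r (Finset.mem_coe.1 hr) r' (Finset.mem_coe.1 hr') he

lemma colFinset_subset (G : Fill n lam) (j : ℕ) (hj : 1 ≤ j) :
    colFinset lam (keyBasement n) G j ⊆ Finset.Icc 1 n := by
  intro v hv
  rcases Finset.mem_image.1 hv with ⟨i, hi, rfl⟩
  exact entry_mem_Icc lam _ G i j hj (Finset.mem_filter.1 hi).2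

end Uniqueness
section Weight

variable {n : ℕ} {lam : Fin n → ℕ}

lemma xwt_eq (hlam : ∀ i j : Fin n, i ≤ j → lam j ≤ lam i) (G : Fill n lam)
    (hG : CoinvFree lam (entry lam (keyBasement n) G)) :
    xwt lam G = ∏ j ∈ Finset.Icc 1 (maxPart lam),
      ∏ v ∈ colFinset lam (keyBasement n) G j, MvPolynomial.X v := by
  have hM : ∀ i : Fin n, lam i ≤ maxPart lam := fun i => Finset.le_sup (Finset.mem_univ i)
  have hA : ∀ i : Fin n,
      (∏ k : Fin (lam i), (MvPolynomial.X ((G i k : ℕ)+1) : MvPolynomial ℕ (Polynomial ℤ)))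
        = ∏ j ∈ Finset.Icc 1 (lam i),
            MvPolynomial.X (entry lam (keyBasement n) G i j) := by
    intro i
    refine Finset.prod_bij' (fun (k : Fin (lam i)) _ => (k : ℕ)+1)
      (fun j hj => (⟨j-1, by simp only [Finset.mem_Icc] at hj; omega⟩ : Fin (lam i)))
      ?_ ?_ ?_ ?_ ?_
    · intro k _
      simp only [Finset.mem_Icc]
      have := k.isLt
      omega
    · intro j hj
      exact Finset.mem_univ _
    · intro k _
      simp
    · intro j hj
      simp only [Finset.mem_Icc] at hj
      show j - 1 + 1 = j
      omega
    · intro k _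
      rw [entry_succ lam _ G i (k : ℕ) k.isLt]
  have hfil : ∀ i : Fin n, Finset.Icc 1 (lam i)
      = (Finset.Icc 1 (maxPart lam)).filter (fun j => j ≤ lam i) := by
    intro i
    ext j
    simp only [Finset.mem_Icc, Finset.mem_filter]
    have := hM i
    omega
  have hB : ∀ j, 1 ≤ j →
      (∏ v ∈ colFinset lam (keyBasement n) G j,
        (MvPolynomial.X v : MvPolynomial ℕ (Polynomial ℤ)))
      = ∏ i ∈ rowsOf n lam j, MvPolynomial.X (entry lam (keyBasement n) G i j) := by
    intro j hj
    apply Finset.prod_image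
    intro r hr r' hr' he
    exact cond_injOn (cond_of_coinvFree lam hlam _ (entry_le lam G) hG j hj) r hr r' hr' he
  calc xwt lam G
      = ∏ i : Fin n, ∏ j ∈ Finset.Icc 1 (lam i),
          MvPolynomial.X (entry lam (keyBasement n) G i j) :=
        Finset.prod_congr rfl (fun i _ => hA i)
    _ = ∏ i : Fin n, ∏ j ∈ Finset.Icc 1 (maxPart lam),
          (if j ≤ lam i then MvPolynomial.X (entry lam (keyBasement n) G i j) else 1) := by
        refine Finset.prod_congr rfl (fun i _ => ?_)
        rw [hfil i, Finset.prod_filter]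
    _ = ∏ j ∈ Finset.Icc 1 (maxPart lam), ∏ i : Fin n,
          (if j ≤ lam i then MvPolynomial.X (entry lam (keyBasement n) G i j) else 1) :=
        Finset.prod_comm
    _ = ∏ j ∈ Finset.Icc 1 (maxPart lam),
          ∏ v ∈ colFinset lam (keyBasement n) G j, MvPolynomial.X v := by
        refine Finset.prod_congr rfl (fun j hj => ?_)
        rw [← Finset.prod_filter]
        exact (hB j (Finset.mem_Icc.1 hj).1).symm

end Weight
open Classical in
/-- `E_λ(x; 1, 0) = e_{λ'}(x_1, …, x_n)`: at `q = 1` the generating function of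
coinversion-free fillings of partition shape `λ` with key basement equals the
product of the elementary symmetric polynomials indexed by the conjugate partition. -/
theorem E_at_q_one_eq_elementary (n : ℕ) (lam : Fin n → ℕ)
    (hlam : ∀ i j : Fin n, i ≤ j → lam j ≤ lam i) :
    (∑ G : Fill n lam,
        if CoinvFree lam (entry lam (keyBasement n) G) then xwt lam G else 0) =
      ∏ j ∈ Finset.Icc 1 (maxPart lam),
        ∑ S ∈ (Finset.Icc 1 n).powersetCard
            ((Finset.univ.filter (fun i : Fin n => j ≤ lam i)).card),
          ∏ v ∈ S, MvPolynomial.X v := by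
  classical
  have hM : ∀ i : Fin n, lam i ≤ maxPart lam := fun i => Finset.le_sup (Finset.mem_univ i)
  rw [Finset.prod_sum]
  rw [show (∑ G : Fill n lam,
        if CoinvFree lam (entry lam (keyBasement n) G) then xwt lam G else 0)
      = ∑ G ∈ Finset.univ.filter
          (fun G : Fill n lam => CoinvFree lam (entry lam (keyBasement n) G)), xwt lam G
    from (Finset.sum_filter _ _).symm]
  refine Finset.sum_bij (fun G _ => fun j _ => colFinset lam (keyBasement n) G j)
    ?_ ?_ ?_ ?_
  · -- maps into the pi set
    intro G hG
    rw [Finset.mem_pi]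
    intro j hj
    rw [Finset.mem_powersetCard]
    obtain ⟨h1, h2⟩ := Finset.mem_Icc.1 hj
    exact ⟨colFinset_subset G j h1,
      colFinset_card_of_coinvFree hlam G (Finset.mem_filter.1 hG).2 j h1⟩
  · -- injective
    intro G hG G' hG' he
    apply fill_ext hlam G G' (Finset.mem_filter.1 hG).2 (Finset.mem_filter.1 hG').2
    intro j h1
    by_cases h2 : j ≤ maxPart lam
    · exact congrFun (congrFun he j) (Finset.mem_Icc.2 ⟨h1, h2⟩)
    · have hrow : Finset.univ.filter (fun i : Fin n => j ≤ lam i) = ∅ := by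
        rw [Finset.filter_eq_empty_iff]
        intro i _
        have := hM i
        omega
      unfold colFinset
      rw [hrow]
      simp
  · -- surjective
    intro q hq
    rw [Finset.mem_pi] at hq
    set pf : ℕ → Finset ℕ :=
      fun j => if h : j ∈ Finset.Icc 1 (maxPart lam) then q j h else ∅ with hpf
    have hgood : GoodCols n lam pf := by
      intro j h1
      by_cases h2 : j ≤ maxPart lam
      · have hj : j ∈ Finset.Icc 1 (maxPart lam) := Finset.mem_Icc.2 ⟨h1, h2⟩
        have hm := hq j hj
        rw [Finset.mem_powersetCard] at hm
        have hpfj : pf j = q j hj := by rw [hpf]; exact dif_pos hj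
        constructor
        · rw [hpfj]
          exact hm.2
        · intro x hx
          rw [hpfj] at hx
          have := Finset.mem_Icc.1 (hm.1 hx)
          omega
      · have hj : j ∉ Finset.Icc 1 (maxPart lam) := by
          simp only [Finset.mem_Icc]
          omega
        have hrow : rowsOf n lam j = ∅ := by
          unfold rowsOf
          rw [Finset.filter_eq_empty_iff]
          intro i _
          have := hM i
          omega
        have hpfj : pf j = ∅ := by rw [hpf]; exact dif_neg hj
        rw [hpfj, hrow]
        simp
    refine ⟨fillOf n lam pf,
      Finset.mem_filter.2 ⟨Finset.mem_univ _, coinvFree_fillOf hlam hgood⟩, ?_⟩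
    funext j hj
    have h1 := (Finset.mem_Icc.1 hj).1
    show colFinset lam (keyBasement n) (fillOf n lam pf) j = q j hj
    rw [colFinset_fillOf hgood j h1]
    rw [hpf]
    exact dif_pos hj
  · -- weights agree
    intro G hG
    exact (xwt_eq hlam G (Finset.mem_filter.1 hG).2).trans
      (Finset.prod_attach (Finset.Icc 1 (maxPart lam))
        (fun j => ∏ v ∈ colFinset lam (keyBasement n) G j, MvPolynomial.X v)).symm

end Paper
end

section
/- Let α = (α_1, α_2) with α_1 > α_2 ≥ 1 and let σ = (σ_1, σ_2) be a big basement with σ_1 > σ_2 (basement entries larger than all filling entries). There is a bijection φ between inversion-free two-row fillings of shape α with big basement σ and inversion-free two-row fillings of shape (α_2, α_1) with big basement (σ_2, σ_1), which preserves the multiset of entries in each column and preserves the major index. -/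
namespace Paper

variable {n : ℕ}

/-! Part A: pure rules -/

def DD (a b c : ℕ) : Prop := (b ≤ c ∧ c ≤ a) ∨ (c ≤ a ∧ a < b) ∨ (a < b ∧ b ≤ c)

def t1 (P A B : ℕ) : ℕ := if P < A ∧ B ≤ P then A else if P < B ∧ A ≤ P then B else min A B
def b1 (P A B : ℕ) : ℕ := if P < A ∧ B ≤ P then B else if P < B ∧ A ≤ P then A else max A B
def b2 (C A B : ℕ) : ℕ := if A < C ∧ C ≤ B then A else if B < C ∧ C ≤ A then B else max A B
def t2 (C A B : ℕ) : ℕ := if A < C ∧ C ≤ B then B else if B < C ∧ C ≤ A then A else min A B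

lemma rule1_perm (P A B : ℕ) : (t1 P A B = A ∧ b1 P A B = B) ∨ (t1 P A B = B ∧ b1 P A B = A) := by
  unfold t1 b1; split_ifs <;> omega
lemma rule2_perm (C A B : ℕ) : (b2 C A B = A ∧ t2 C A B = B) ∨ (b2 C A B = B ∧ t2 C A B = A) := by
  unfold b2 t2; split_ifs <;> omega
lemma t1_comm (P A B : ℕ) : t1 P B A = t1 P A B := by unfold t1; split_ifs <;> omega
lemma b1_comm (P A B : ℕ) : b1 P B A = b1 P A B := by unfold b1; split_ifs <;> omega
lemma b2_comm (C A B : ℕ) : b2 C B A = b2 C A B := by unfold b2; split_ifs <;> omega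
lemma t2_comm (C A B : ℕ) : t2 C B A = t2 C A B := by unfold t2; split_ifs <;> omega
lemma DD_iff_rule1 (P A B : ℕ) : DD P A B ↔ (t1 P A B = A ∧ b1 P A B = B) := by
  unfold DD t1 b1; split_ifs <;> omega
lemma DD_iff_rule2 (C a c : ℕ) : DD a C c ↔ (b2 C a c = a ∧ t2 C a c = c) := by
  unfold DD b2 t2; split_ifs <;> omega
lemma rule1_DD (P A B : ℕ) : DD P (t1 P A B) (b1 P A B) := by
  unfold DD t1 b1; split_ifs <;> omega
lemma rule2_DD (C A B : ℕ) : DD (b2 C A B) C (t2 C A B) := by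
  unfold DD b2 t2; split_ifs <;> omega
lemma t1_big (P A B : ℕ) (hA : A ≤ P) (hB : B ≤ P) : t1 P A B = min A B := by
  unfold t1; split_ifs <;> omega
lemma b1_big (P A B : ℕ) (hA : A ≤ P) (hB : B ≤ P) : b1 P A B = max A B := by
  unfold b1; split_ifs <;> omega

lemma E1abs (a T Bo c d t : ℕ) (hm : (T = c ∧ Bo = d) ∨ (T = d ∧ Bo = c))
    (h1 : DD a T Bo) (h2 : DD c t d) :
    ((if a < T then 1 else 0) + (if T < t then 1 else 0) : ℕ)
      = (if a < c then 1 else 0) + (if c < t then 1 else 0) := by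
  unfold DD at h1 h2
  rcases hm with ⟨rfl, rfl⟩ | ⟨rfl, rfl⟩ <;> split_ifs <;> omega

lemma E2abs (a b c0 d0 T Bo c d t : ℕ)
    (hm1 : (a = c0 ∧ b = d0) ∨ (a = d0 ∧ b = c0))
    (hm2 : (T = c ∧ Bo = d) ∨ (T = d ∧ Bo = c))
    (h1 : DD a T Bo) (h2 : DD c t d) (h3 : DD c0 c d0) :
    ((if b < c ∧ c ≤ a then 1 else 0) + (if d0 < d then 1 else 0) : ℕ)
      = (if b < Bo then 1 else 0) + (if Bo < t ∧ t ≤ T then 1 else 0) := by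
  unfold DD at h1 h2 h3
  rcases hm1 with ⟨rfl, rfl⟩ | ⟨rfl, rfl⟩ <;> rcases hm2 with ⟨rfl, rfl⟩ | ⟨rfl, rfl⟩ <;>
    split_ifs <;> omega

lemma E3abs (a b c0 d0 T Bo c d t : ℕ)
    (hm1 : (a = c0 ∧ b = d0) ∨ (a = d0 ∧ b = c0))
    (hm2 : (T = c ∧ Bo = d) ∨ (T = d ∧ Bo = c))
    (h1 : DD a T Bo) (h2 : DD c t d) (h3 : DD c0 c d0) :
    ((if a < T then 1 else 0) + (if b < Bo then 1 else 0) : ℕ)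
      = (if a < c then 1 else 0) + (if b < c ∧ c ≤ a then 1 else 0)
        + (if d0 < d then 1 else 0) := by
  unfold DD at h1 h2 h3
  rcases hm1 with ⟨rfl, rfl⟩ | ⟨rfl, rfl⟩ <;> rcases hm2 with ⟨rfl, rfl⟩ | ⟨rfl, rfl⟩ <;>
    split_ifs <;> omega

lemma perm_trans (x y u v A B : ℕ) (h1 : (x = A ∧ y = B) ∨ (x = B ∧ y = A))
    (h2 : (u = A ∧ v = B) ∨ (u = B ∧ v = A)) :
    (x = u ∧ y = v) ∨ (x = v ∧ y = u) := by omega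

/-! Part B: decoders and chains -/

def d1 : ℕ → List (ℕ × ℕ) → List (ℕ × ℕ)
  | _, [] => []
  | P, p :: r => (t1 P p.1 p.2, b1 P p.1 p.2) :: d1 (t1 P p.1 p.2) r

def ft : ℕ → List (ℕ × ℕ) → ℕ
  | P, [] => P
  | P, p :: r => ft (t1 P p.1 p.2) r

def d2R : ℕ → List (ℕ × ℕ) → List (ℕ × ℕ)
  | _, [] => []
  | C, p :: r => (b2 C p.1 p.2, t2 C p.1 p.2) :: d2R (b2 C p.1 p.2) r

def d2 (l : List (ℕ × ℕ)) (t : ℕ) : List (ℕ × ℕ) := (d2R t l.reverse).reverse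

@[simp] lemma d1_nil (P : ℕ) : d1 P [] = [] := rfl
@[simp] lemma d2R_nil (C : ℕ) : d2R C [] = [] := rfl
@[simp] lemma d2_nil (t : ℕ) : d2 [] t = [] := rfl

lemma d1_append (P : ℕ) (l m : List (ℕ × ℕ)) :
    d1 P (l ++ m) = d1 P l ++ d1 (ft P l) m := by
  induction l generalizing P with
  | nil => simp [ft]
  | cons p r ih => simp [d1, ft, ih]

lemma ft_append (P : ℕ) (l m : List (ℕ × ℕ)) : ft P (l ++ m) = ft (ft P l) m := by
  induction l generalizing P with
  | nil => simp [ft]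
  | cons p r ih => simp [ft, ih]

lemma d1_snoc (P : ℕ) (l : List (ℕ × ℕ)) (p : ℕ × ℕ) :
    d1 P (l ++ [p]) = d1 P l ++ [(t1 (ft P l) p.1 p.2, b1 (ft P l) p.1 p.2)] := by
  rw [d1_append]; rfl

lemma d2_snoc (l : List (ℕ × ℕ)) (p : ℕ × ℕ) (t : ℕ) :
    d2 (l ++ [p]) t = d2 l (b2 t p.1 p.2) ++ [(b2 t p.1 p.2, t2 t p.1 p.2)] := by
  simp [d2, List.reverse_append, d2R]

@[simp] lemma d1_length (P : ℕ) (l : List (ℕ × ℕ)) : (d1 P l).length = l.length := by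
  induction l generalizing P with
  | nil => rfl
  | cons p r ih => simp [d1, ih]

@[simp] lemma d2R_length (C : ℕ) (l : List (ℕ × ℕ)) : (d2R C l).length = l.length := by
  induction l generalizing C with
  | nil => rfl
  | cons p r ih => simp [d2R, ih]

@[simp] lemma d2_length (l : List (ℕ × ℕ)) (t : ℕ) : (d2 l t).length = l.length := by
  simp [d2]

def sp (p : ℕ × ℕ) : ℕ × ℕ := (min p.1 p.2, max p.1 p.2)

lemma sp_rule1 (P A B : ℕ) : sp (t1 P A B, b1 P A B) = sp (A, B) := by
  rcases rule1_perm P A B with ⟨h1, h2⟩ | ⟨h1, h2⟩ <;> simp [sp, h1, h2] <;>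
    constructor <;> omega

lemma sp_rule2 (C A B : ℕ) : sp (b2 C A B, t2 C A B) = sp (A, B) := by
  rcases rule2_perm C A B with ⟨h1, h2⟩ | ⟨h1, h2⟩ <;> simp [sp, h1, h2] <;>
    constructor <;> omega

lemma d1_sp_map (P : ℕ) (l : List (ℕ × ℕ)) : (d1 P l).map sp = l.map sp := by
  induction l generalizing P with
  | nil => rfl
  | cons p r ih => simp only [d1, List.map_cons, ih, sp_rule1]

lemma d2R_sp_map (C : ℕ) (l : List (ℕ × ℕ)) : (d2R C l).map sp = l.map sp := by
  induction l generalizing C with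
  | nil => rfl
  | cons p r ih => simp only [d2R, List.map_cons, ih, sp_rule2]

lemma d2_sp_map (l : List (ℕ × ℕ)) (t : ℕ) : (d2 l t).map sp = l.map sp := by
  have h := d2R_sp_map t l.reverse
  have := congrArg List.reverse h
  simpa [d2, List.map_reverse] using this

lemma sp_cases {x y : ℕ × ℕ} (h : sp x = sp y) :
    (x.1 = y.1 ∧ x.2 = y.2) ∨ (x.1 = y.2 ∧ x.2 = y.1) := by
  simp only [sp, Prod.mk.injEq] at h
  omega

lemma d1_ext (l m : List (ℕ × ℕ)) (h : l.map sp = m.map sp) (P : ℕ) : d1 P l = d1 P m := by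
  induction l generalizing m P with
  | nil => cases m <;> simp_all
  | cons p r ih =>
    cases m with
    | nil => simp_all
    | cons q s =>
      simp only [List.map_cons, List.cons.injEq] at h
      obtain ⟨h1, h2⟩ := h
      rcases sp_cases h1 with ⟨e1, e2⟩ | ⟨e1, e2⟩
      · simp only [d1, e1, e2, ih _ h2]
      · simp only [d1, e1, e2, t1_comm, b1_comm, ih _ h2]

lemma d2R_ext (l m : List (ℕ × ℕ)) (h : l.map sp = m.map sp) (C : ℕ) : d2R C l = d2R C m := by
  induction l generalizing m C with
  | nil => cases m <;> simp_all
  | cons p r ih =>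
    cases m with
    | nil => simp_all
    | cons q s =>
      simp only [List.map_cons, List.cons.injEq] at h
      obtain ⟨h1, h2⟩ := h
      rcases sp_cases h1 with ⟨e1, e2⟩ | ⟨e1, e2⟩
      · simp only [d2R, e1, e2, ih _ h2]
      · simp only [d2R, e1, e2, b2_comm, t2_comm, ih _ h2]

lemma d2_ext (l m : List (ℕ × ℕ)) (h : l.map sp = m.map sp) (t : ℕ) : d2 l t = d2 m t := by
  unfold d2
  rw [d2R_ext l.reverse m.reverse (by simp [List.map_reverse, h]) t]

def Ch1 : ℕ → List (ℕ × ℕ) → Prop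
  | _, [] => True
  | P, p :: r => DD P p.1 p.2 ∧ Ch1 p.1 r

def Ch2R : ℕ → List (ℕ × ℕ) → Prop
  | _, [] => True
  | C, p :: r => DD p.1 C p.2 ∧ Ch2R p.1 r

def Ch2 (l : List (ℕ × ℕ)) (t : ℕ) : Prop := Ch2R t l.reverse

lemma Ch1_iff_fix (P : ℕ) (l : List (ℕ × ℕ)) : Ch1 P l ↔ d1 P l = l := by
  induction l generalizing P with
  | nil => simp [Ch1]
  | cons p r ih =>
    simp only [Ch1, d1, List.cons.injEq]
    constructor
    · rintro ⟨h1, h2⟩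
      obtain ⟨e1, e2⟩ := (DD_iff_rule1 P p.1 p.2).mp h1
      refine ⟨?_, ?_⟩
      · exact Prod.ext e1 e2
      · rw [e1]; exact (ih p.1).mp h2
    · rintro ⟨h1, h2⟩
      have e1 : t1 P p.1 p.2 = p.1 := congrArg Prod.fst h1
      have e2 : b1 P p.1 p.2 = p.2 := congrArg Prod.snd h1
      refine ⟨(DD_iff_rule1 P p.1 p.2).mpr ⟨e1, e2⟩, (ih p.1).mpr ?_⟩
      rwa [e1] at h2

lemma Ch2R_iff_fix (C : ℕ) (l : List (ℕ × ℕ)) : Ch2R C l ↔ d2R C l = l := by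
  induction l generalizing C with
  | nil => simp [Ch2R]
  | cons p r ih =>
    simp only [Ch2R, d2R, List.cons.injEq]
    constructor
    · rintro ⟨h1, h2⟩
      obtain ⟨e1, e2⟩ := (DD_iff_rule2 C p.1 p.2).mp h1
      refine ⟨Prod.ext e1 e2, ?_⟩
      rw [e1]; exact (ih p.1).mp h2
    · rintro ⟨h1, h2⟩
      have e1 : b2 C p.1 p.2 = p.1 := congrArg Prod.fst h1
      have e2 : t2 C p.1 p.2 = p.2 := congrArg Prod.snd h1
      refine ⟨(DD_iff_rule2 C p.1 p.2).mpr ⟨e1, e2⟩, (ih p.1).mpr ?_⟩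
      rwa [e1] at h2

lemma Ch2_iff_fix (l : List (ℕ × ℕ)) (t : ℕ) : Ch2 l t ↔ d2 l t = l := by
  unfold Ch2 d2
  rw [Ch2R_iff_fix]
  constructor
  · intro h; rw [h, List.reverse_reverse]
  · intro h; have := congrArg List.reverse h; simpa using this

lemma Ch1_d1 (P : ℕ) (l : List (ℕ × ℕ)) : Ch1 P (d1 P l) := by
  induction l generalizing P with
  | nil => trivial
  | cons p r ih => exact ⟨rule1_DD P p.1 p.2, ih _⟩

lemma Ch2R_d2R (C : ℕ) (l : List (ℕ × ℕ)) : Ch2R C (d2R C l) := by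
  induction l generalizing C with
  | nil => trivial
  | cons p r ih => exact ⟨rule2_DD C p.1 p.2, ih _⟩

lemma Ch2_d2 (l : List (ℕ × ℕ)) (t : ℕ) : Ch2 (d2 l t) t := by
  unfold Ch2 d2
  rw [List.reverse_reverse]
  exact Ch2R_d2R t l.reverse

lemma Ch2R_snoc (C : ℕ) (l : List (ℕ × ℕ)) (p : ℕ × ℕ) :
    Ch2R C (l ++ [p]) ↔ Ch2R C l ∧ DD p.1 ((l.getLast?.map Prod.fst).getD C) p.2 := by
  induction l generalizing C with
  | nil => simp [Ch2R]
  | cons q l ih =>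
    have hgl : ((q :: l).getLast?.map Prod.fst).getD C = (l.getLast?.map Prod.fst).getD q.1 := by
      cases l with
      | nil => simp
      | cons x m =>
        rw [List.getLast?_cons_cons]
        rcases h : (x :: m).getLast? with _ | y
        · simp at h
        · simp [h]
    show (DD q.1 C q.2 ∧ Ch2R q.1 (l ++ [p])) ↔ _
    rw [ih q.1, hgl]
    show _ ↔ (DD q.1 C q.2 ∧ Ch2R q.1 l) ∧ _
    tauto

lemma Ch2_cons (p : ℕ × ℕ) (r : List (ℕ × ℕ)) (t : ℕ) :
    Ch2 (p :: r) t ↔ DD p.1 ((r.head?.map Prod.fst).getD t) p.2 ∧ Ch2 r t := by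
  unfold Ch2
  rw [show (p :: r).reverse = r.reverse ++ [p] by simp, Ch2R_snoc]
  rw [List.getLast?_reverse]
  tauto

/-! Part C: statistics -/

def cnt2 : List ℕ → ℕ → ℕ
  | [], _ => 0
  | a :: l, r => (if a < l.headD r then 1 else 0) + cnt2 l r

def wsum : List ℕ → ℕ
  | [] => 0
  | a :: l => (if a < l.headD a then l.length else 0) + wsum l

@[simp] lemma cnt2_nil (r : ℕ) : cnt2 [] r = 0 := rfl
@[simp] lemma wsum_nil : wsum [] = 0 := rfl
lemma cnt2_cons (a r : ℕ) (l : List ℕ) :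
    cnt2 (a :: l) r = (if a < l.headD r then 1 else 0) + cnt2 l r := rfl
lemma wsum_cons (a : ℕ) (l : List ℕ) :
    wsum (a :: l) = (if a < l.headD a then l.length else 0) + wsum l := rfl

lemma headD_append_single {α : Type*} (l : List α) (y d : α) :
    (l ++ [y]).headD d = l.headD y := by cases l <;> simp

lemma cnt2_snoc (l : List ℕ) (y r : ℕ) :
    cnt2 (l ++ [y]) r = cnt2 l y + (if y < r then 1 else 0) := by
  induction l with
  | nil => simp [cnt2_cons]
  | cons a l ih =>
    rw [List.cons_append, cnt2_cons, cnt2_cons, ih, headD_append_single]; omega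

lemma wsum_snoc (l : List ℕ) (y : ℕ) : wsum (l ++ [y]) = wsum l + cnt2 l y := by
  induction l with
  | nil => simp [wsum_cons]
  | cons a l ih =>
    rw [List.cons_append, wsum_cons, wsum_cons, cnt2_cons, ih, headD_append_single]
    simp only [List.length_append, List.length_cons, List.length_nil]
    cases l <;> simp <;> split_ifs <;> omega

lemma wsum_append (x y : List ℕ) :
    wsum (x ++ y) = wsum x + y.length * cnt2 x (y.headD 0) + wsum y := by
  induction x with
  | nil => simp [wsum, cnt2]
  | cons a x ih =>
    rw [List.cons_append, wsum_cons, wsum_cons, cnt2_cons, ih]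
    simp only [List.length_append]
    cases x with
    | nil =>
      cases y <;> simp [wsum_cons, cnt2_cons] <;> split_ifs <;> ring_nf <;> omega
    | cons b x' =>
      simp only [List.headD_cons, List.cons_append, List.length_cons]
      grind

lemma cnt2_cons_big (x r N : ℕ) (l : List ℕ) (hl : ∀ y ∈ l, y ≤ N) (hx : N < x) (hr : r ≤ N) :
    cnt2 (x :: l) r = cnt2 l r := by
  cases l with
  | nil => simp [cnt2]; omega
  | cons b m =>
    have := hl b (by simp)
    simp [cnt2]; omega

lemma wsum_cons_big (x N : ℕ) (l : List ℕ) (hl : ∀ y ∈ l, y ≤ N) (hx : N < x) :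
    wsum (x :: l) = wsum l := by
  cases l with
  | nil => simp [wsum]
  | cons b m =>
    have := hl b (by simp)
    simp [wsum]; omega

/-- row sums of `maj` equal `wsum`. -/
lemma rowsum_eq_wsum (l : List ℕ) (m : ℕ) (h : l.length = m + 1) :
    ∑ j ∈ Finset.Icc 1 m, (if l.getD (j-1) 0 < l.getD j 0 then m - j + 1 else 0) = wsum l := by
  -- convert to range sum
  have hconv : ∑ j ∈ Finset.Icc 1 m, (if l.getD (j-1) 0 < l.getD j 0 then m - j + 1 else 0)
      = ∑ j ∈ Finset.range m, (if l.getD j 0 < l.getD (j+1) 0 then m - j else 0) := by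
    rw [show Finset.Icc 1 m = Finset.Ico 1 (m+1) by rw [Finset.Ico_add_one_right_eq_Icc],
      Finset.sum_Ico_eq_sum_range]
    apply Finset.sum_congr (by simp)
    intro j hj
    simp only [Finset.mem_range] at hj
    have e1 : 1 + j - 1 = j := by omega
    have e2 : m - (1 + j) + 1 = m - j := by omega
    rw [e1, e2, show 1 + j = j + 1 by omega]
  rw [hconv]; clear hconv
  induction l generalizing m with
  | nil => simp at h
  | cons a l ih =>
    cases l with
    | nil =>
      have : m = 0 := by simpa using h
      subst this; simp [wsum]
    | cons b l2 =>
      have hm : m = l2.length + 1 := by simp at h; omega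
      subst hm
      rw [Finset.sum_range_succ']
      have hIH := ih (m := l2.length) (by simp)
      have hterm : ∀ j ∈ Finset.range (l2.length),
          (if (a :: b :: l2).getD (j+1) 0 < (a :: b :: l2).getD (j+1+1) 0
            then l2.length + 1 - (j+1) else 0)
          = (if (b :: l2).getD j 0 < (b :: l2).getD (j+1) 0 then l2.length - j else 0) := by
        intro j hj
        simp only [List.getD_cons_succ]
        congr 1
        omega
      rw [Finset.sum_congr rfl hterm, hIH]
      have hw : wsum (a :: b :: l2) = (if a < b then l2.length + 1 else 0) + wsum (b :: l2) := by
        rw [wsum_cons]; simp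
      rw [hw]
      simp only [List.getD_cons_succ, List.getD_cons_zero, Nat.sub_zero]
      split_ifs <;> omega

/-! Part D: the master lemma -/

@[simp] lemma ft_nil (P : ℕ) : ft P [] = P := rfl
@[simp] lemma ft_cons (P : ℕ) (p : ℕ × ℕ) (r : List (ℕ × ℕ)) :
    ft P (p :: r) = ft (t1 P p.1 p.2) r := rfl

lemma ite_lt_zero (x : ℕ) : (if x < 0 then (1:ℕ) else 0) = 0 := by simp

lemma master (P : ℕ) (q : List (ℕ × ℕ)) :
    ∀ p t, (∀ x ∈ q ++ [p], x.1 ≤ P ∧ x.2 ≤ P) →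
      cnt2 ((d1 P (q ++ [p])).map Prod.fst) t = cnt2 ((d2 (q ++ [p]) t).map Prod.fst) t
      ∧ cnt2 ((d2 (q ++ [p]) t).map Prod.snd) 0
          = cnt2 ((d1 P (q ++ [p])).map Prod.snd) 0
            + (if b1 (ft P q) p.1 p.2 < t ∧ t ≤ t1 (ft P q) p.1 p.2 then 1 else 0)
      ∧ wsum ((d1 P (q ++ [p])).map Prod.fst) + wsum ((d1 P (q ++ [p])).map Prod.snd)
          = wsum ((d2 (q ++ [p]) t).map Prod.fst) + wsum ((d2 (q ++ [p]) t).map Prod.snd) := by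
  induction q using List.reverseRecOn with
  | nil =>
    intro p t hb
    obtain ⟨h1, h2⟩ := hb p (by simp)
    have e1 : d1 P ([] ++ [p]) = [(t1 P p.1 p.2, b1 P p.1 p.2)] := rfl
    have e2 : d2 ([] ++ [p]) t = [(b2 t p.1 p.2, t2 t p.1 p.2)] := by
      simp [d2, d2R]
    rw [e1, e2]
    simp only [List.map_cons, List.map_nil, cnt2_cons, cnt2_nil, List.headD_nil, wsum_cons,
      wsum_nil, List.length_nil, ft_nil, ite_self, ite_lt_zero]
    have ht1 := t1_big P p.1 p.2 h1 h2
    have hb1 := b1_big P p.1 p.2 h1 h2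
    have hD := rule2_DD t p.1 p.2
    unfold DD at hD
    rcases rule2_perm t p.1 p.2 with ⟨e3, e4⟩ | ⟨e3, e4⟩ <;>
      rcases hD with hD | hD | hD <;> refine ⟨?_, ?_, ?_⟩ <;>
      first
      | trivial
      | grind
  | append_singleton q' p' IH =>
    intro p t hb
    have hb' : ∀ x ∈ q' ++ [p'], x.1 ≤ P ∧ x.2 ≤ P := by
      intro x hx; exact hb x (by simp at hx ⊢; tauto)
    obtain ⟨ih1, ih2, ih3⟩ := IH p' (b2 t p.1 p.2) hb'
    simp only [d1_snoc, d2_snoc, ft_append, ft_nil, ft_cons, List.map_append, List.map_cons,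
      List.map_nil, cnt2_snoc, wsum_snoc, ite_lt_zero, Nat.add_zero] at ih1 ih2 ih3 ⊢
    -- abstract E-facts
    have hm2 : (t1 (t1 (ft P q') p'.1 p'.2) p.1 p.2 = b2 t p.1 p.2
          ∧ b1 (t1 (ft P q') p'.1 p'.2) p.1 p.2 = t2 t p.1 p.2)
        ∨ (t1 (t1 (ft P q') p'.1 p'.2) p.1 p.2 = t2 t p.1 p.2
          ∧ b1 (t1 (ft P q') p'.1 p'.2) p.1 p.2 = b2 t p.1 p.2) :=
      perm_trans _ _ _ _ _ _ (rule1_perm _ p.1 p.2) (rule2_perm _ p.1 p.2)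
    have hm1 : (t1 (ft P q') p'.1 p'.2 = b2 (b2 t p.1 p.2) p'.1 p'.2
          ∧ b1 (ft P q') p'.1 p'.2 = t2 (b2 t p.1 p.2) p'.1 p'.2)
        ∨ (t1 (ft P q') p'.1 p'.2 = t2 (b2 t p.1 p.2) p'.1 p'.2
          ∧ b1 (ft P q') p'.1 p'.2 = b2 (b2 t p.1 p.2) p'.1 p'.2) :=
      perm_trans _ _ _ _ _ _ (rule1_perm _ p'.1 p'.2) (rule2_perm _ p'.1 p'.2)
    have hE1 := E1abs (t1 (ft P q') p'.1 p'.2) _ _ _ _ t hm2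
      (rule1_DD _ p.1 p.2) (rule2_DD t p.1 p.2)
    have hE2 := E2abs (t1 (ft P q') p'.1 p'.2) (b1 (ft P q') p'.1 p'.2) _ _ _ _ _ _ t hm1 hm2
      (rule1_DD _ p.1 p.2) (rule2_DD t p.1 p.2) (rule2_DD _ p'.1 p'.2)
    have hE3 := E3abs (t1 (ft P q') p'.1 p'.2) (b1 (ft P q') p'.1 p'.2) _ _ _ _ _ _ t hm1 hm2
      (rule1_DD _ p.1 p.2) (rule2_DD t p.1 p.2) (rule2_DD _ p'.1 p'.2)
    refine ⟨by omega, by omega, by omega⟩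

/-! Part E: InvFree characterizations -/

variable {n : ℕ}

lemma notcycA (a b c : ℕ) : ¬ cyc (b, 1) (a, 3) (c, 2) ↔ DD a b c := by
  unfold cyc tlt DD; simp only []; push_neg
  constructor <;> intro h <;> omega

lemma notcycB (a b c : ℕ) : ¬ cyc (c, 2) (b, 1) (a, 3) ↔ DD a b c := by
  unfold cyc tlt DD; simp only []; push_neg
  constructor <;> intro h <;> omega

lemma fin2_lt {r r' : Fin 2} (h : r < r') : r = 0 ∧ r' = 1 := by
  revert h; revert r r'; decide

@[simp] lemma twoRowEntry_zero (T B : List ℕ) (j : ℕ) :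
    twoRowEntry T B 0 j = T.getD j 0 := rfl
@[simp] lemma twoRowEntry_one (T B : List ℕ) (j : ℕ) :
    twoRowEntry T B 1 j = B.getD j 0 := rfl

lemma invFree1_iff (a1 a2 : ℕ) (h : a2 ≤ a1) (Tl Bl : List ℕ) :
    InvFree ![a1, a2] (twoRowEntry Tl Bl) ↔
      ∀ j, 1 ≤ j → j ≤ a2 → DD (Tl.getD (j-1) 0) (Tl.getD j 0) (Bl.getD j 0) := by
  constructor
  · intro hf j h1 h2
    have hA : typeA ![a1, a2] 0 1 j := by
      refine ⟨by decide, h1, ?_, ?_, ?_⟩ <;>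
        simp [Matrix.cons_val_zero, Matrix.cons_val_one, Matrix.head_cons] <;> omega
    have := hf.1 0 1 j hA
    rw [show invA (twoRowEntry Tl Bl) 0 1 j
        = cyc (Tl.getD j 0, 1) (Tl.getD (j-1) 0, 3) (Bl.getD j 0, 2) from rfl] at this
    exact (notcycA _ _ _).mp this
  · intro hD
    constructor
    · intro r r' j ht
      obtain ⟨rfl, rfl⟩ := fin2_lt ht.1
      have h2 : j ≤ a2 := by
        have := ht.2.2.2.1
        simpa [Matrix.cons_val_one, Matrix.head_cons] using this
      rw [show invA (twoRowEntry Tl Bl) 0 1 j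
          = cyc (Tl.getD j 0, 1) (Tl.getD (j-1) 0, 3) (Bl.getD j 0, 2) from rfl]
      exact (notcycA _ _ _).mpr (hD j ht.2.1 h2)
    · intro r r' j ht
      exfalso
      obtain ⟨rfl, rfl⟩ := fin2_lt ht.1
      have := ht.2.2.2.2
      simp [Matrix.cons_val_zero, Matrix.cons_val_one, Matrix.head_cons] at this
      omega
  
lemma invFree2_iff (a1 a2 : ℕ) (h : a2 < a1) (Tl Bl : List ℕ) :
    InvFree ![a2, a1] (twoRowEntry Tl Bl) ↔
      ∀ j, 1 ≤ j → j ≤ a2 + 1 → DD (Bl.getD (j-1) 0) (Bl.getD j 0) (Tl.getD (j-1) 0) := by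
  constructor
  · intro hf j h1 h2
    have hB : typeB ![a2, a1] 1 0 j := by
      refine ⟨by decide, h1, ?_, ?_, ?_⟩ <;>
        simp [Matrix.cons_val_zero, Matrix.cons_val_one, Matrix.head_cons] <;> omega
    have := hf.2 1 0 j hB
    rw [show invB (twoRowEntry Tl Bl) 1 0 j
        = cyc (Tl.getD (j-1) 0, 2) (Bl.getD j 0, 1) (Bl.getD (j-1) 0, 3) from rfl] at this
    exact (notcycB _ _ _).mp this
  · intro hD
    constructor
    · intro r r' j ht
      exfalso
      obtain ⟨rfl, rfl⟩ := fin2_lt ht.1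
      have := ht.2.2.2.2
      simp [Matrix.cons_val_zero, Matrix.cons_val_one, Matrix.head_cons] at this
      omega
    · intro r r' j ht
      obtain ⟨rfl, rfl⟩ := fin2_lt ht.1
      have h2 : j ≤ a2 + 1 := by
        have h3 := ht.2.2.2.1
        simp [Matrix.cons_val_zero, Matrix.cons_val_one, Matrix.head_cons] at h3
        omega
      rw [show invB (twoRowEntry Tl Bl) 1 0 j
          = cyc (Tl.getD (j-1) 0, 2) (Bl.getD j 0, 1) (Bl.getD (j-1) 0, 3) from rfl]
      exact (notcycB _ _ _).mpr (hD j ht.2.1 h2)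

lemma maj_two (α0 α1 : ℕ) (Tl Bl : List ℕ) (h0 : Tl.length = α0 + 1) (h1 : Bl.length = α1 + 1) :
    maj ![α0, α1] (twoRowEntry Tl Bl) = wsum Tl + wsum Bl := by
  unfold maj
  rw [Fin.sum_univ_two]
  simp only [Matrix.cons_val_zero, Matrix.cons_val_one, Matrix.head_cons, twoRowEntry_zero,
    twoRowEntry_one]
  rw [← rowsum_eq_wsum Tl α0 h0, ← rowsum_eq_wsum Bl α1 h1]
  rfl

/-! Part F: indexed-to-chain conversions -/

lemma chain1_iff (P : ℕ) (T B : List ℕ) (hlen : B.length ≤ T.length) :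
    (∀ j, 1 ≤ j → j ≤ B.length →
        DD ((P :: T).getD (j-1) 0) ((P :: T).getD j 0) (B.getD (j-1) 0))
      ↔ Ch1 P (T.zip B) := by
  induction B generalizing P T with
  | nil =>
    simp only [List.zip_nil_right]
    constructor
    · intro _; trivial
    · intro _ j h1 h2; simp at h2; omega
  | cons b B' ih =>
    cases T with
    | nil => simp at hlen
    | cons t T' =>
      have hlen' : B'.length ≤ T'.length := by simpa using hlen
      constructor
      · intro h
        refine ⟨?_, (ih t T' hlen').mp ?_⟩
        · have := h 1 le_rfl (by simp)
          simpa using this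
        · intro j h1 h2
          obtain ⟨i, rfl⟩ : ∃ i, j = i + 1 := ⟨j - 1, by omega⟩
          have := h (i + 2) (by omega) (by simp; omega)
          simpa [List.getD_cons_succ] using this
      · rintro ⟨hh, hc⟩ j h1 h2
        obtain ⟨i, rfl⟩ : ∃ i, j = i + 1 := ⟨j - 1, by omega⟩
        cases i with
        | zero => simpa using hh
        | succ i' =>
          have := (ih t T' hlen').mpr hc (i' + 1) (by omega) (by simp at h2 ⊢; omega)
          simpa [List.getD_cons_succ] using this

lemma chain2_iff (T B : List ℕ) (hlen : T.length < B.length) :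
    (∀ j, 1 ≤ j → j ≤ T.length →
        DD (B.getD (j-1) 0) (B.getD j 0) (T.getD (j-1) 0))
      ↔ Ch2 ((B.take T.length).zip T) (B.getD T.length 0) := by
  induction T generalizing B with
  | nil =>
    simp only [List.length_nil, List.take_zero, List.zip_nil_right]
    constructor
    · intro _; trivial
    · intro _ j h1 h2; omega
  | cons h T' ih =>
    cases B with
    | nil => simp at hlen
    | cons x B' =>
      have hlen' : T'.length < B'.length := by simpa using hlen
      have hzip : ((x :: B').take (h :: T').length).zip (h :: T')
          = (x, h) :: ((B'.take T'.length).zip T') := by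
        simp [List.take_succ_cons]
      rw [hzip, Ch2_cons]
      have href : ((((B'.take T'.length).zip T').head?.map Prod.fst).getD
          ((x :: B').getD (h :: T').length 0)) = B'.getD 0 0 := by
        cases T' with
        | nil => simp
        | cons h2 T'' =>
          cases B' with
          | nil => simp at hlen'
          | cons y B'' => simp
      rw [href]
      have htail : (x :: B').getD (h :: T').length 0 = B'.getD T'.length 0 := by
        simp [List.getD_cons_succ]
      rw [htail]
      constructor
      · intro hD
        refine ⟨by simpa using hD 1 le_rfl (by simp), (ih B' hlen').mp ?_⟩
        intro j h1 h2
        obtain ⟨i, rfl⟩ : ∃ i, j = i + 1 := ⟨j - 1, by omega⟩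
        have := hD (i + 2) (by omega) (by simp; omega)
        simpa [List.getD_cons_succ] using this
      · rintro ⟨hh, hc⟩ j h1 h2
        obtain ⟨i, rfl⟩ : ∃ i, j = i + 1 := ⟨j - 1, by omega⟩
        cases i with
        | zero => simpa using hh
        | succ i' =>
          have := (ih B' hlen').mpr hc (i' + 1) (by omega) (by simp at h2 ⊢; omega)
          simpa [List.getD_cons_succ] using this

/-! Part G: bridges and utilities -/

lemma getD_take (l : List ℕ) (n i : ℕ) (h : i < n) :
    (l.take n).getD i 0 = l.getD i 0 := by
  simp [List.getD_eq_getElem?_getD, List.getElem?_take, h]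

lemma getD_le_bound {N : ℕ} {l : List ℕ} (h : ∀ x ∈ l, 1 ≤ x ∧ x ≤ N) (i : ℕ) :
    l.getD i 0 ≤ N := by
  by_cases hi : i < l.length
  · rw [List.getD_eq_getElem _ _ hi]
    exact (h _ (List.getElem_mem hi)).2
  · rw [List.getD_eq_default _ _ (by omega)]
    omega

lemma sp_swap (x : ℕ × ℕ) : sp x.swap = sp x := by
  simp only [sp, Prod.swap, Prod.mk.injEq]
  constructor <;> omega

/-- Bridge for shape 1: InvFree iff Ch1. -/
lemma inv1_iff_chain (N a1 a2 s1 s2 : ℕ) (ha : a2 ≤ a1) (T B : List ℕ)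
    (hT : T.length = a1) (hB : B.length = a2) :
    InvFree ![a1, a2] (twoRowEntry ((N+1+s1) :: T) ((N+1+s2) :: B))
      ↔ Ch1 (N+1+s1) ((T.take a2).zip B) := by
  rw [invFree1_iff a1 a2 ha]
  rw [← chain1_iff (N+1+s1) (T.take a2) B (by simp [hT, hB]; omega)]
  rw [hB]
  constructor <;> intro h j h1 h2 <;> have hh := h j h1 h2 <;>
    obtain ⟨i, rfl⟩ : ∃ i, j = i + 1 := ⟨j - 1, by omega⟩
  · -- from (M1::T),(M2::B) indexed to (M1::T.take a2), B.getD (j-1)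
    have e1 : ((N+1+s1) :: T.take a2).getD (i + 1 - 1) 0 = ((N+1+s1) :: T).getD (i + 1 - 1) 0 := by
      simp only [Nat.add_sub_cancel]
      cases i with
      | zero => rfl
      | succ i' => simp only [List.getD_cons_succ]; exact getD_take T a2 i' (by omega)
    have e2 : ((N+1+s1) :: T.take a2).getD (i + 1) 0 = ((N+1+s1) :: T).getD (i + 1) 0 := by
      simp only [List.getD_cons_succ]; exact getD_take T a2 i (by omega)
    have e3 : ((N+1+s2) :: B).getD (i + 1) 0 = B.getD (i + 1 - 1) 0 := by
      simp only [List.getD_cons_succ, Nat.add_sub_cancel]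
    rw [e1, e2, ← e3]
    exact hh
  · have e1 : ((N+1+s1) :: T.take a2).getD (i + 1 - 1) 0 = ((N+1+s1) :: T).getD (i + 1 - 1) 0 := by
      simp only [Nat.add_sub_cancel]
      cases i with
      | zero => rfl
      | succ i' => simp only [List.getD_cons_succ]; exact getD_take T a2 i' (by omega)
    have e2 : ((N+1+s1) :: T.take a2).getD (i + 1) 0 = ((N+1+s1) :: T).getD (i + 1) 0 := by
      simp only [List.getD_cons_succ]; exact getD_take T a2 i (by omega)
    have e3 : ((N+1+s2) :: B).getD (i + 1) 0 = B.getD (i + 1 - 1) 0 := by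
      simp only [List.getD_cons_succ, Nat.add_sub_cancel]
    rw [e3, ← e1, ← e2]
    exact hh

/-- Bridge for shape 2: InvFree iff Ch2. -/
lemma inv2_iff_chain (N a1 a2 s1 s2 : ℕ) (ha : a2 < a1) (hs : s2 ≤ s1) (T B : List ℕ)
    (hT : T.length = a2) (hB : B.length = a1)
    (bB : ∀ x ∈ B, 1 ≤ x ∧ x ≤ N) :
    InvFree ![a2, a1] (twoRowEntry ((N+1+s2) :: T) ((N+1+s1) :: B))
      ↔ Ch2 ((B.take a2).zip T) (B.getD a2 0) := by
  rw [invFree2_iff a1 a2 ha]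
  rw [show a2 = T.length from hT.symm, ← chain2_iff T B (by omega)]
  rw [hT]
  constructor
  · intro h j h1 h2
    have hh := h (j + 1) (by omega) (by omega)
    obtain ⟨i, rfl⟩ : ∃ i, j = i + 1 := ⟨j - 1, by omega⟩
    simp only [List.getD_cons_succ, Nat.add_sub_cancel] at hh
    simpa [Nat.add_sub_cancel] using hh
  · intro h j h1 h2
    obtain ⟨i, rfl⟩ : ∃ i, j = i + 1 := ⟨j - 1, by omega⟩
    cases i with
    | zero =>
      -- the automatic first column condition
      simp only [List.getD_cons_succ, List.getD_cons_zero, Nat.sub_self]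
      show DD (N+1+s1) (B.getD 0 0) (N+1+s2)
      have := getD_le_bound bB 0
      unfold DD
      left
      omega
    | succ i' =>
      have hh := h (i' + 1) (by omega) (by omega)
      simp only [List.getD_cons_succ, Nat.add_sub_cancel]
      simpa [Nat.add_sub_cancel] using hh

lemma wsum_big_decomp (Mv N : ℕ) (x tail : List ℕ) (hx : ∀ y ∈ x, y ≤ N) (hM : N < Mv)
    (ht : tail.headD 0 ≤ N) :
    wsum (Mv :: (x ++ tail)) = wsum x + tail.length * cnt2 x (tail.headD 0) + wsum tail := by
  show wsum ((Mv :: x) ++ tail) = _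
  have h1 : wsum (Mv :: x) = wsum x := wsum_cons_big Mv N x hx hM
  have h2 : cnt2 (Mv :: x) (tail.headD 0) = cnt2 x (tail.headD 0) :=
    cnt2_cons_big Mv (tail.headD 0) N x hx hM ht
  rw [wsum_append, h1, h2]

/-! Part H: the maps -/

def Fwd (a2 : ℕ) (p : List ℕ × List ℕ) : List ℕ × List ℕ :=
  ((d2 ((p.1.take a2).zip p.2) (p.1.getD a2 0)).map Prod.snd,
   (d2 ((p.1.take a2).zip p.2) (p.1.getD a2 0)).map Prod.fst ++ p.1.drop a2)

def Bwd (M a2 : ℕ) (p : List ℕ × List ℕ) : List ℕ × List ℕ :=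
  ((d1 M (p.1.zip (p.2.take a2))).map Prod.fst ++ p.2.drop a2,
   (d1 M (p.1.zip (p.2.take a2))).map Prod.snd)

lemma headD_drop (l : List ℕ) (n : ℕ) : (l.drop n).headD 0 = l.getD n 0 := by
  rw [List.headD_eq_head?, List.head?_drop, List.getD_eq_getElem?_getD]

lemma sp_comm_zip (l m : List ℕ) : (l.zip m).map sp = (m.zip l).map sp := by
  rw [← List.zip_swap m l, List.map_map]
  apply List.map_congr_left
  intro x _
  exact sp_swap x

lemma zip_fst_snd {α β : Type*} (l : List (α × β)) :
    (l.map Prod.fst).zip (l.map Prod.snd) = l := by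
  rw [List.zip_map']
  simp

lemma zip_snd_fst {α β : Type*} (l : List (α × β)) :
    (l.map Prod.snd).zip (l.map Prod.fst) = l.map Prod.swap := by
  rw [List.zip_map']
  rfl

section Side1

variable {N a1 a2 s1 s2 : ℕ} {T B : List ℕ}

/-- Common facts for a side-1 element. -/
lemma pair_bounds (hB : B.length = a2) (ha : a2 < a1) (hT : T.length = a1)
    (bT : ∀ x ∈ T, 1 ≤ x ∧ x ≤ N) (bB : ∀ x ∈ B, 1 ≤ x ∧ x ≤ N) :
    ∀ x ∈ (T.take a2).zip B, (1 ≤ x.1 ∧ x.1 ≤ N) ∧ (1 ≤ x.2 ∧ x.2 ≤ N) := by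
  intro x hx
  obtain ⟨h1, h2⟩ := List.of_mem_zip (a := x.1) (b := x.2) (by simpa using hx)
  exact ⟨bT x.1 (List.mem_of_mem_take h1), bB x.2 h2⟩

lemma c2_bounds (hB : B.length = a2) (ha : a2 < a1) (hT : T.length = a1)
    (bT : ∀ x ∈ T, 1 ≤ x ∧ x ≤ N) (bB : ∀ x ∈ B, 1 ≤ x ∧ x ≤ N) :
    ∀ x ∈ d2 ((T.take a2).zip B) (T.getD a2 0),
      (1 ≤ x.1 ∧ x.1 ≤ N) ∧ (1 ≤ x.2 ∧ x.2 ≤ N) := by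
  intro x hx
  have hm : sp x ∈ ((T.take a2).zip B).map sp := by
    rw [← d2_sp_map ((T.take a2).zip B) (T.getD a2 0)]
    exact List.mem_map_of_mem (f := sp) hx
  obtain ⟨z, hz, hze⟩ := List.mem_map.mp hm
  have hzb := pair_bounds hB ha hT bT bB z hz
  rcases sp_cases hze with ⟨e1, e2⟩ | ⟨e1, e2⟩ <;>
    exact ⟨by omega, by omega⟩

end Side1

section Main

variable {N a1 a2 s1 s2 : ℕ}

/-- All the basic facts about the forward image. -/
lemma fwd_mem (ha2 : 1 ≤ a2) (ha : a2 < a1) (hs : s2 < s1) (T B : List ℕ)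
    (hT : T.length = a1) (hB : B.length = a2)
    (bT : ∀ x ∈ T, 1 ≤ x ∧ x ≤ N) (bB : ∀ x ∈ B, 1 ≤ x ∧ x ≤ N)
    (hinv : InvFree ![a1, a2] (twoRowEntry ((N+1+s1) :: T) ((N+1+s2) :: B))) :
    (Fwd a2 (T, B)).1.length = a2 ∧ (Fwd a2 (T, B)).2.length = a1 ∧
    (∀ x ∈ (Fwd a2 (T, B)).1, 1 ≤ x ∧ x ≤ N) ∧ (∀ x ∈ (Fwd a2 (T, B)).2, 1 ≤ x ∧ x ≤ N) ∧
    InvFree ![a2, a1] (twoRowEntry ((N+1+s2) :: (Fwd a2 (T, B)).1)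
      ((N+1+s1) :: (Fwd a2 (T, B)).2)) := by
  have hTk : (T.take a2).length = a2 := by rw [List.length_take]; omega
  have hcols : ((T.take a2).zip B).length = a2 := by rw [List.length_zip, hTk, hB]; omega
  have hc2 : (d2 ((T.take a2).zip B) (T.getD a2 0)).length = a2 := by
    rw [d2_length]; exact hcols
  have hbc2 := c2_bounds (N := N) hB ha hT bT bB
  simp only [Fwd]
  have hlen1 : (List.map Prod.snd (d2 ((T.take a2).zip B) (T.getD a2 0))).length = a2 := by
    rw [List.length_map]; exact hc2
  have hlen2 : (List.map Prod.fst (d2 ((T.take a2).zip B) (T.getD a2 0)) ++ T.drop a2).length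
      = a1 := by
    rw [List.length_append, List.length_map, hc2, List.length_drop]; omega
  refine ⟨hlen1, hlen2, ?_, ?_, ?_⟩
  · intro x hx
    obtain ⟨z, hz, rfl⟩ := List.mem_map.mp hx
    exact (hbc2 z hz).2
  · intro x hx
    rcases List.mem_append.mp hx with hx | hx
    · obtain ⟨z, hz, rfl⟩ := List.mem_map.mp hx
      exact (hbc2 z hz).1
    · exact bT x (List.mem_of_mem_drop hx)
  · -- InvFree of the image
    rw [inv2_iff_chain N a1 a2 s1 s2 ha (by omega) _ _ hlen1 hlen2 (by
      intro x hx
      rcases List.mem_append.mp hx with hx | hx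
      · obtain ⟨z, hz, rfl⟩ := List.mem_map.mp hx
        exact (hbc2 z hz).1
      · exact bT x (List.mem_of_mem_drop hx))]
    have htake : (List.map Prod.fst (d2 ((T.take a2).zip B) (T.getD a2 0)) ++ T.drop a2).take a2
        = List.map Prod.fst (d2 ((T.take a2).zip B) (T.getD a2 0)) :=
      List.take_left' (by rw [List.length_map]; exact hc2)
    have hgetD : (List.map Prod.fst (d2 ((T.take a2).zip B) (T.getD a2 0)) ++ T.drop a2).getD a2 0
        = T.getD a2 0 := by
      rw [List.getD_append_right _ _ _ _ (by rw [List.length_map, hc2])]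
      rw [List.length_map, hc2, Nat.sub_self, List.getD_eq_getElem?_getD,
        show (0:ℕ) = 0 from rfl]
      rw [show (T.drop a2)[0]? = T[a2 + 0]? from List.getElem?_drop (xs := T) (i := a2) (j := 0)]
      rw [List.getD_eq_getElem?_getD]
      norm_num
    rw [htake, hgetD, zip_fst_snd]
    exact Ch2_d2 _ _

lemma fwd_maj (ha2 : 1 ≤ a2) (ha : a2 < a1) (hs : s2 < s1) (T B : List ℕ)
    (hT : T.length = a1) (hB : B.length = a2)
    (bT : ∀ x ∈ T, 1 ≤ x ∧ x ≤ N) (bB : ∀ x ∈ B, 1 ≤ x ∧ x ≤ N)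
    (hinv : InvFree ![a1, a2] (twoRowEntry ((N+1+s1) :: T) ((N+1+s2) :: B))) :
    maj ![a2, a1] (twoRowEntry ((N+1+s2) :: (Fwd a2 (T, B)).1)
        ((N+1+s1) :: (Fwd a2 (T, B)).2))
      = maj ![a1, a2] (twoRowEntry ((N+1+s1) :: T) ((N+1+s2) :: B)) := by
  have hTk : (T.take a2).length = a2 := by rw [List.length_take]; omega
  have hcols : ((T.take a2).zip B).length = a2 := by rw [List.length_zip, hTk, hB]; omega
  have hc2 : (d2 ((T.take a2).zip B) (T.getD a2 0)).length = a2 := by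
    rw [d2_length]; exact hcols
  have hbc2 := c2_bounds (N := N) hB ha hT bT bB
  have hfst : ((T.take a2).zip B).map Prod.fst = T.take a2 :=
    List.map_fst_zip (by omega)
  have hsnd : ((T.take a2).zip B).map Prod.snd = B :=
    List.map_snd_zip (by omega)
  have hfix : d1 (N+1+s1) ((T.take a2).zip B) = (T.take a2).zip B :=
    (Ch1_iff_fix _ _).mp ((inv1_iff_chain N a1 a2 s1 s2 (by omega) T B hT hB).mp hinv)
  obtain ⟨q, pl, hqp⟩ : ∃ q pl, (T.take a2).zip B = q ++ [pl] := by
    rcases List.eq_nil_or_concat ((T.take a2).zip B) with hnil | ⟨q, pl, h⟩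
    · exfalso; rw [hnil] at hcols; simp at hcols; omega
    · exact ⟨q, pl, by rw [h, List.concat_eq_append]⟩
  have hbnd : ∀ x ∈ q ++ [pl], x.1 ≤ N+1+s1 ∧ x.2 ≤ N+1+s1 := by
    intro x hx
    have := pair_bounds (N := N) hB ha hT bT bB x (by rw [hqp]; exact hx)
    omega
  obtain ⟨m1, _, m3⟩ := master (N+1+s1) q pl (T.getD a2 0) hbnd
  rw [← hqp, hfix] at m1 m3
  -- assemble the two maj values
  have ht0 : T.getD a2 0 ≤ N := getD_le_bound bT a2
  have hbT' : ∀ y ∈ T.take a2, y ≤ N := fun y hy => (bT y (List.mem_of_mem_take hy)).2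
  have hbB' : ∀ y ∈ B, y ≤ N := fun y hy => (bB y hy).2
  have hhd : (T.drop a2).headD 0 = T.getD a2 0 := headD_drop T a2
  -- maj of the original
  have e1 : maj ![a1, a2] (twoRowEntry ((N+1+s1) :: T) ((N+1+s2) :: B))
      = wsum ((N+1+s1) :: T) + wsum ((N+1+s2) :: B) :=
    maj_two a1 a2 _ _ (by simp [hT]) (by simp [hB])
  have e2 : wsum ((N+1+s1) :: T)
      = wsum (T.take a2) + (T.drop a2).length * cnt2 (T.take a2) (T.getD a2 0)
        + wsum (T.drop a2) := by
    conv_lhs => rw [show T = T.take a2 ++ T.drop a2 from (List.take_append_drop a2 T).symm]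
    rw [wsum_big_decomp (N+1+s1) N _ _ hbT' (by omega) (by rw [hhd]; exact ht0), hhd]
  have e3 : wsum ((N+1+s2) :: B) = wsum B := wsum_cons_big _ N _ hbB' (by omega)
  -- maj of the image
  have hbc2f : ∀ y ∈ (d2 ((T.take a2).zip B) (T.getD a2 0)).map Prod.fst, y ≤ N := by
    intro y hy; obtain ⟨z, hz, rfl⟩ := List.mem_map.mp hy; exact (hbc2 z hz).1.2
  have hbc2s : ∀ y ∈ (d2 ((T.take a2).zip B) (T.getD a2 0)).map Prod.snd, y ≤ N := by
    intro y hy; obtain ⟨z, hz, rfl⟩ := List.mem_map.mp hy; exact (hbc2 z hz).2.2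
  have e4 : maj ![a2, a1] (twoRowEntry ((N+1+s2) :: (Fwd a2 (T, B)).1)
        ((N+1+s1) :: (Fwd a2 (T, B)).2))
      = wsum ((N+1+s2) :: (Fwd a2 (T, B)).1) + wsum ((N+1+s1) :: (Fwd a2 (T, B)).2) :=
    maj_two a2 a1 _ _
      (by simp only [Fwd, List.length_cons, List.length_map]; rw [hc2])
      (by simp only [Fwd, List.length_cons, List.length_append, List.length_map,
            List.length_drop]; rw [hc2]; omega)
  have e5 : wsum ((N+1+s2) :: (Fwd a2 (T, B)).1)
      = wsum ((d2 ((T.take a2).zip B) (T.getD a2 0)).map Prod.snd) :=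
    wsum_cons_big _ N _ hbc2s (by omega)
  have e6 : wsum ((N+1+s1) :: (Fwd a2 (T, B)).2)
      = wsum ((d2 ((T.take a2).zip B) (T.getD a2 0)).map Prod.fst)
        + (T.drop a2).length * cnt2 ((d2 ((T.take a2).zip B) (T.getD a2 0)).map Prod.fst)
            (T.getD a2 0)
        + wsum (T.drop a2) := by
    show wsum ((N+1+s1) :: (_ ++ T.drop a2)) = _
    rw [wsum_big_decomp (N+1+s1) N _ _ hbc2f (by omega) (by rw [hhd]; exact ht0), hhd]
  rw [e1, e2, e3, e4, e5, e6]
  rw [hfst] at m1 m3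
  rw [hsnd] at m3
  rw [← m1]
  omega

lemma fwd_colM (ha2 : 1 ≤ a2) (ha : a2 < a1) (T B : List ℕ)
    (hT : T.length = a1) (hB : B.length = a2) :
    ∀ j, colM (Fwd a2 (T, B)).1 (Fwd a2 (T, B)).2 j = colM T B j := by
  intro j
  have hTk : (T.take a2).length = a2 := by rw [List.length_take]; omega
  have hcols : ((T.take a2).zip B).length = a2 := by rw [List.length_zip, hTk, hB]; omega
  have hc2 : (d2 ((T.take a2).zip B) (T.getD a2 0)).length = a2 := by
    rw [d2_length]; exact hcols
  have hfst : ((T.take a2).zip B).map Prod.fst = T.take a2 :=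
    List.map_fst_zip (by omega)
  have hsnd : ((T.take a2).zip B).map Prod.snd = B :=
    List.map_snd_zip (by omega)
  have hlen1 : (Fwd a2 (T, B)).1.length = a2 := by
    simp only [Fwd, List.length_map]; exact hc2
  have hlen2 : (Fwd a2 (T, B)).2.length = a1 := by
    simp only [Fwd, List.length_append, List.length_map, List.length_drop]; rw [hc2]; omega
  unfold colM
  rcases Nat.lt_or_ge j a2 with hj | hj
  · -- paired columns
    have hj1 : j < a1 := by omega
    rw [if_pos (by omega : j < (Fwd a2 (T, B)).1.length),
        if_pos (by omega : j < (Fwd a2 (T, B)).2.length),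
        if_pos (by omega : j < T.length), if_pos (by omega : j < B.length)]
    have hjc : j < (d2 ((T.take a2).zip B) (T.getD a2 0)).length := by omega
    have hjz : j < ((T.take a2).zip B).length := by omega
    -- sp equality at column j
    have hsp := congrArg (fun l => l[j]?) (d2_sp_map ((T.take a2).zip B) (T.getD a2 0))
    simp only [List.getElem?_map, List.getElem?_eq_getElem hjc, List.getElem?_eq_getElem hjz,
      Option.map_some] at hsp
    have hspc := sp_cases (Option.some.inj hsp)
    -- express the four entries
    have g1 : (Fwd a2 (T, B)).1.getD j 0
        = ((d2 ((T.take a2).zip B) (T.getD a2 0))[j]).2 := by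
      simp only [Fwd]
      rw [List.getD_eq_getElem _ _ (by rw [List.length_map]; omega), List.getElem_map]
    have g2 : (Fwd a2 (T, B)).2.getD j 0
        = ((d2 ((T.take a2).zip B) (T.getD a2 0))[j]).1 := by
      simp only [Fwd]
      rw [List.getD_append _ _ _ _ (by rw [List.length_map]; omega),
        List.getD_eq_getElem _ _ (by rw [List.length_map]; omega), List.getElem_map]
    have g3 : T.getD j 0 = (((T.take a2).zip B)[j]).1 := by
      have h5 : (((T.take a2).zip B)[j]).1 = (((T.take a2).zip B).map Prod.fst).getD j 0 := by
        rw [List.getD_eq_getElem _ _ (by rw [List.length_map]; omega), List.getElem_map]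
      rw [h5, hfst, getD_take T a2 j hj]
    have g4 : B.getD j 0 = (((T.take a2).zip B)[j]).2 := by
      have h5 : (((T.take a2).zip B)[j]).2 = (((T.take a2).zip B).map Prod.snd).getD j 0 := by
        rw [List.getD_eq_getElem _ _ (by rw [List.length_map]; omega), List.getElem_map]
      rw [h5, hsnd]
    rw [g1, g2, g3, g4]
    rcases hspc with ⟨e1, e2⟩ | ⟨e1, e2⟩
    · rw [e1, e2, add_comm]
    · rw [e1, e2]
  · rcases Nat.lt_or_ge j a1 with hj1 | hj1
    · rw [if_neg (by omega), if_pos (by omega : j < (Fwd a2 (T, B)).2.length),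
        if_pos (by omega : j < T.length), if_neg (by omega)]
      have g2 : (Fwd a2 (T, B)).2.getD j 0 = (T.drop a2).getD (j - a2) 0 := by
        simp only [Fwd]
        rw [List.getD_append_right _ _ _ _ (by rw [List.length_map]; omega), List.length_map, hc2]
      have g3 : T.getD j 0 = (T.drop a2).getD (j - a2) 0 := by
        conv_lhs => rw [show T = T.take a2 ++ T.drop a2 from (List.take_append_drop a2 T).symm]
        rw [List.getD_append_right _ _ _ _ (by omega), hTk]
      rw [g2, g3, zero_add, add_zero]
    · rw [if_neg (by omega), if_neg (by omega), if_neg (by omega), if_neg (by omega)]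

lemma c1_bounds {Tp Bp : List ℕ} (M : ℕ)
    (bT : ∀ x ∈ Tp, 1 ≤ x ∧ x ≤ N) (bB : ∀ x ∈ Bp, 1 ≤ x ∧ x ≤ N) :
    ∀ x ∈ d1 M (Tp.zip (Bp.take a2)), (1 ≤ x.1 ∧ x.1 ≤ N) ∧ (1 ≤ x.2 ∧ x.2 ≤ N) := by
  intro x hx
  have hm : sp x ∈ (Tp.zip (Bp.take a2)).map sp := by
    rw [← d1_sp_map M (Tp.zip (Bp.take a2))]
    exact List.mem_map_of_mem (f := sp) hx
  obtain ⟨z, hz, hze⟩ := List.mem_map.mp hm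
  obtain ⟨h1, h2⟩ := List.of_mem_zip (a := z.1) (b := z.2) (by simpa using hz)
  have b1' := bT z.1 h1
  have b2' := bB z.2 (List.mem_of_mem_take h2)
  rcases sp_cases hze with ⟨e1, e2⟩ | ⟨e1, e2⟩ <;> exact ⟨by omega, by omega⟩

lemma bwd_mem (ha2 : 1 ≤ a2) (ha : a2 < a1) (hs : s2 < s1) (Tp Bp : List ℕ)
    (hT : Tp.length = a2) (hB : Bp.length = a1)
    (bT : ∀ x ∈ Tp, 1 ≤ x ∧ x ≤ N) (bB : ∀ x ∈ Bp, 1 ≤ x ∧ x ≤ N) :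
    (Bwd (N+1+s1) a2 (Tp, Bp)).1.length = a1 ∧ (Bwd (N+1+s1) a2 (Tp, Bp)).2.length = a2 ∧
    (∀ x ∈ (Bwd (N+1+s1) a2 (Tp, Bp)).1, 1 ≤ x ∧ x ≤ N) ∧
    (∀ x ∈ (Bwd (N+1+s1) a2 (Tp, Bp)).2, 1 ≤ x ∧ x ≤ N) ∧
    InvFree ![a1, a2] (twoRowEntry ((N+1+s1) :: (Bwd (N+1+s1) a2 (Tp, Bp)).1)
      ((N+1+s2) :: (Bwd (N+1+s1) a2 (Tp, Bp)).2)) := by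
  have hBk : (Bp.take a2).length = a2 := by rw [List.length_take]; omega
  have hzl : (Tp.zip (Bp.take a2)).length = a2 := by rw [List.length_zip, hT, hBk]; omega
  have hc1 : (d1 (N+1+s1) (Tp.zip (Bp.take a2))).length = a2 := by rw [d1_length]; exact hzl
  have hbc1 := c1_bounds (N := N) (a2 := a2) (Tp := Tp) (Bp := Bp) (N+1+s1) bT bB
  have hlen1 : (Bwd (N+1+s1) a2 (Tp, Bp)).1.length = a1 := by
    simp only [Bwd, List.length_append, List.length_map, List.length_drop]; rw [hc1]; omega
  have hlen2 : (Bwd (N+1+s1) a2 (Tp, Bp)).2.length = a2 := by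
    simp only [Bwd, List.length_map]; exact hc1
  refine ⟨hlen1, hlen2, ?_, ?_, ?_⟩
  · intro x hx
    simp only [Bwd] at hx
    rcases List.mem_append.mp hx with hx | hx
    · obtain ⟨z, hz, rfl⟩ := List.mem_map.mp hx
      exact (hbc1 z hz).1
    · exact bB x (List.mem_of_mem_drop hx)
  · intro x hx
    simp only [Bwd] at hx
    obtain ⟨z, hz, rfl⟩ := List.mem_map.mp hx
    exact (hbc1 z hz).2
  · rw [inv1_iff_chain N a1 a2 s1 s2 (by omega) _ _ hlen1 hlen2]
    have htake : (Bwd (N+1+s1) a2 (Tp, Bp)).1.take a2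
        = (d1 (N+1+s1) (Tp.zip (Bp.take a2))).map Prod.fst := by
      simp only [Bwd]
      exact List.take_left' (by rw [List.length_map]; exact hc1)
    have hsnd' : (Bwd (N+1+s1) a2 (Tp, Bp)).2
        = (d1 (N+1+s1) (Tp.zip (Bp.take a2))).map Prod.snd := rfl
    rw [htake, hsnd', zip_fst_snd]
    exact Ch1_d1 _ _

lemma bwd_fwd (ha2 : 1 ≤ a2) (ha : a2 < a1) (hs : s2 < s1) (T B : List ℕ)
    (hT : T.length = a1) (hB : B.length = a2)
    (hinv : InvFree ![a1, a2] (twoRowEntry ((N+1+s1) :: T) ((N+1+s2) :: B))) :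
    Bwd (N+1+s1) a2 (Fwd a2 (T, B)) = (T, B) := by
  have hTk : (T.take a2).length = a2 := by rw [List.length_take]; omega
  have hcols : ((T.take a2).zip B).length = a2 := by rw [List.length_zip, hTk, hB]; omega
  have hc2 : (d2 ((T.take a2).zip B) (T.getD a2 0)).length = a2 := by
    rw [d2_length]; exact hcols
  have hfix : d1 (N+1+s1) ((T.take a2).zip B) = (T.take a2).zip B :=
    (Ch1_iff_fix _ _).mp ((inv1_iff_chain N a1 a2 s1 s2 (by omega) T B hT hB).mp hinv)
  have htake : (Fwd a2 (T, B)).2.take a2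
      = (d2 ((T.take a2).zip B) (T.getD a2 0)).map Prod.fst := by
    simp only [Fwd]
    exact List.take_left' (by rw [List.length_map]; exact hc2)
  have hdrop : (Fwd a2 (T, B)).2.drop a2 = T.drop a2 := by
    simp only [Fwd]
    exact List.drop_left' (by rw [List.length_map]; exact hc2)
  have hzip : (Fwd a2 (T, B)).1.zip ((Fwd a2 (T, B)).2.take a2)
      = (d2 ((T.take a2).zip B) (T.getD a2 0)).map Prod.swap := by
    rw [htake]
    exact zip_snd_fst _
  have hd1 : d1 (N+1+s1) ((d2 ((T.take a2).zip B) (T.getD a2 0)).map Prod.swap)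
      = (T.take a2).zip B := by
    have hsp' : ((d2 ((T.take a2).zip B) (T.getD a2 0)).map Prod.swap).map sp
        = ((T.take a2).zip B).map sp := by
      rw [List.map_map, show sp ∘ Prod.swap = sp from funext sp_swap]
      exact d2_sp_map _ _
    rw [d1_ext _ _ hsp' (N+1+s1), hfix]
  show ((d1 (N+1+s1) ((Fwd a2 (T, B)).1.zip ((Fwd a2 (T, B)).2.take a2))).map Prod.fst
      ++ (Fwd a2 (T, B)).2.drop a2,
    (d1 (N+1+s1) ((Fwd a2 (T, B)).1.zip ((Fwd a2 (T, B)).2.take a2))).map Prod.snd) = (T, B)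
  rw [hzip, hdrop, hd1]
  rw [List.map_fst_zip (by omega), List.map_snd_zip (by omega)]
  rw [List.take_append_drop]

lemma fwd_bwd (ha2 : 1 ≤ a2) (ha : a2 < a1) (hs : s2 < s1) (Tp Bp : List ℕ)
    (hT : Tp.length = a2) (hB : Bp.length = a1)
    (bB : ∀ x ∈ Bp, 1 ≤ x ∧ x ≤ N)
    (hinv : InvFree ![a2, a1] (twoRowEntry ((N+1+s2) :: Tp) ((N+1+s1) :: Bp))) :
    Fwd a2 (Bwd (N+1+s1) a2 (Tp, Bp)) = (Tp, Bp) := by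
  have hBk : (Bp.take a2).length = a2 := by rw [List.length_take]; omega
  have hzl : (Tp.zip (Bp.take a2)).length = a2 := by rw [List.length_zip, hT, hBk]; omega
  have hc1 : (d1 (N+1+s1) (Tp.zip (Bp.take a2))).length = a2 := by rw [d1_length]; exact hzl
  have hfix2 : d2 ((Bp.take a2).zip Tp) (Bp.getD a2 0) = (Bp.take a2).zip Tp :=
    (Ch2_iff_fix _ _).mp ((inv2_iff_chain N a1 a2 s1 s2 ha (by omega) Tp Bp hT hB bB).mp hinv)
  have htake : (Bwd (N+1+s1) a2 (Tp, Bp)).1.take a2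
      = (d1 (N+1+s1) (Tp.zip (Bp.take a2))).map Prod.fst := by
    simp only [Bwd]
    exact List.take_left' (by rw [List.length_map]; exact hc1)
  have hdrop : (Bwd (N+1+s1) a2 (Tp, Bp)).1.drop a2 = Bp.drop a2 := by
    simp only [Bwd]
    exact List.drop_left' (by rw [List.length_map]; exact hc1)
  have hgetD : (Bwd (N+1+s1) a2 (Tp, Bp)).1.getD a2 0 = Bp.getD a2 0 := by
    simp only [Bwd]
    rw [List.getD_append_right _ _ _ _ (by rw [List.length_map]; omega), List.length_map, hc1,
      Nat.sub_self, List.getD_eq_getElem?_getD,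
      show (Bp.drop a2)[0]? = Bp[a2 + 0]? from List.getElem?_drop (xs := Bp) (i := a2) (j := 0),
      List.getD_eq_getElem?_getD]
    norm_num
  have hzip : ((Bwd (N+1+s1) a2 (Tp, Bp)).1.take a2).zip (Bwd (N+1+s1) a2 (Tp, Bp)).2
      = d1 (N+1+s1) (Tp.zip (Bp.take a2)) := by
    rw [htake]
    exact zip_fst_snd _
  have hd2 : d2 (d1 (N+1+s1) (Tp.zip (Bp.take a2))) (Bp.getD a2 0) = (Bp.take a2).zip Tp := by
    have hsp' : (d1 (N+1+s1) (Tp.zip (Bp.take a2))).map sp = ((Bp.take a2).zip Tp).map sp := by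
      rw [d1_sp_map]
      exact sp_comm_zip _ _
    rw [d2_ext _ _ hsp' (Bp.getD a2 0), hfix2]
  show ((d2 (((Bwd (N+1+s1) a2 (Tp, Bp)).1.take a2).zip (Bwd (N+1+s1) a2 (Tp, Bp)).2)
      ((Bwd (N+1+s1) a2 (Tp, Bp)).1.getD a2 0)).map Prod.snd,
    (d2 (((Bwd (N+1+s1) a2 (Tp, Bp)).1.take a2).zip (Bwd (N+1+s1) a2 (Tp, Bp)).2)
      ((Bwd (N+1+s1) a2 (Tp, Bp)).1.getD a2 0)).map Prod.fst
      ++ (Bwd (N+1+s1) a2 (Tp, Bp)).1.drop a2) = (Tp, Bp)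
  rw [hzip, hgetD, hdrop, hd2]
  rw [List.map_fst_zip (by omega), List.map_snd_zip (by omega)]
  rw [List.take_append_drop]

end Main


/-- Two-row bijection for inversion-free fillings with big basements: there is a
column-multiset and major-index preserving bijection between inversion-free fillings
of shape `(a₁, a₂)` with big basement `(σ₁, σ₂)` and those of shape `(a₂, a₁)` with
big basement `(σ₂, σ₁)`. (Big basement entries `N + 1 + σᵢ` exceed all entries `≤ N`.) -/
theorem two_row_invfree_bijection (N a1 a2 : ℕ) (ha2 : 1 ≤ a2) (ha : a2 < a1)
    (s1 s2 : ℕ) (hs : s2 < s1) :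
    ∃ e : {p : List ℕ × List ℕ //
            p.1.length = a1 ∧ p.2.length = a2 ∧
            (∀ x ∈ p.1, 1 ≤ x ∧ x ≤ N) ∧ (∀ x ∈ p.2, 1 ≤ x ∧ x ≤ N) ∧
            InvFree ![a1, a2]
              (twoRowEntry ((N + 1 + s1) :: p.1) ((N + 1 + s2) :: p.2))} ≃
          {p : List ℕ × List ℕ //
            p.1.length = a2 ∧ p.2.length = a1 ∧
            (∀ x ∈ p.1, 1 ≤ x ∧ x ≤ N) ∧ (∀ x ∈ p.2, 1 ≤ x ∧ x ≤ N) ∧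
            InvFree ![a2, a1]
              (twoRowEntry ((N + 1 + s2) :: p.1) ((N + 1 + s1) :: p.2))},
      ∀ p, maj ![a2, a1]
            (twoRowEntry ((N + 1 + s2) :: (e p).1.1) ((N + 1 + s1) :: (e p).1.2)) =
          maj ![a1, a2]
            (twoRowEntry ((N + 1 + s1) :: p.1.1) ((N + 1 + s2) :: p.1.2)) ∧
        ∀ j, colM (e p).1.1 (e p).1.2 j = colM p.1.1 p.1.2 j := by
  refine ⟨{
    toFun := fun p => ⟨Fwd a2 p.1, ?_⟩
    invFun := fun p => ⟨Bwd (N + 1 + s1) a2 p.1, ?_⟩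
    left_inv := ?_
    right_inv := ?_ }, ?_⟩
  · obtain ⟨⟨T, B⟩, h1, h2, h3, h4, h5⟩ := p
    exact fwd_mem ha2 ha hs T B h1 h2 h3 h4 h5
  · obtain ⟨⟨Tp, Bp⟩, h1, h2, h3, h4, h5⟩ := p
    exact bwd_mem ha2 ha hs Tp Bp h1 h2 h3 h4
  · rintro ⟨⟨T, B⟩, h1, h2, h3, h4, h5⟩
    exact Subtype.ext (bwd_fwd ha2 ha hs T B h1 h2 h5)
  · rintro ⟨⟨Tp, Bp⟩, h1, h2, h3, h4, h5⟩
    exact Subtype.ext (fwd_bwd ha2 ha hs Tp Bp h1 h2 h4 h5)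
  · rintro ⟨⟨T, B⟩, h1, h2, h3, h4, h5⟩
    exact ⟨fwd_maj ha2 ha hs T B h1 h2 h3 h4 h5, fwd_colM ha2 ha T B h1 h2⟩

end Paper
end

section
/- In a coinversion-free augmented filling, any two boxes in the same column have distinct entries, and any two boxes in adjacent columns with equal entries must have the right box in a row weakly above the left box; i.e., every coinversion-free filling is non-attacking. -/
namespace Paper

variable {n : ℕ}

lemma invA_ne1 {F : Fin n → ℕ → ℕ} {r r' : Fin n} {j : ℕ} (h : invA F r r' j) :
    F r j ≠ F r' j := by
  intro hEq
  simp only [invA, cyc, tlt] at h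
  omega

lemma invA_ne2 {F : Fin n → ℕ → ℕ} {r r' : Fin n} {j : ℕ} (h : invA F r r' j) :
    F r (j - 1) ≠ F r' j := by
  intro hEq
  simp only [invA, cyc, tlt] at h
  omega

lemma invB_ne1 {F : Fin n → ℕ → ℕ} {r r' : Fin n} {j : ℕ} (h : invB F r r' j) :
    F r' (j - 1) ≠ F r (j - 1) := by
  intro hEq
  simp only [invB, cyc, tlt] at h
  omega

lemma invB_ne2 {F : Fin n → ℕ → ℕ} {r r' : Fin n} {j : ℕ} (h : invB F r r' j) :
    F r j ≠ F r' (j - 1) := by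
  intro hEq
  simp only [invB, cyc, tlt] at h
  omega

/-- Every coinversion-free filling is non-attacking: entries in the same column are
distinct, and equal entries in adjacent columns must have the right box weakly above
the left box. -/
theorem coinvfree_is_nonattacking (n : ℕ) (α : Fin n → ℕ) (σ : Equiv.Perm (Fin n))
    (b : Fin n → ℕ) (hb : b = fun i => (σ i : ℕ) + 1)
    (G : Fill n α) (hF : CoinvFree α (entry α b G)) :
    (∀ i i' : Fin n, ∀ j : ℕ, i ≠ i' → j ≤ α i → j ≤ α i' →
      entry α b G i j ≠ entry α b G i' j) ∧
    (∀ i i' : Fin n, ∀ j : ℕ, i' < i → j ≤ α i' → j + 1 ≤ α i →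
      entry α b G i (j + 1) ≠ entry α b G i' j) := by
  obtain ⟨hA, hB⟩ := hF
  constructor
  · have key : ∀ i i' : Fin n, i < i' → ∀ j : ℕ, j ≤ α i → j ≤ α i' →
        entry α b G i j ≠ entry α b G i' j := by
      intro i i' hlt j hji hji'
      rcases Nat.eq_zero_or_pos j with rfl | hj
      · intro h
        simp [entry, hb] at h
        have : σ i = σ i' := Fin.val_injective (by omega)
        exact absurd (σ.injective this) (Fin.ne_of_lt hlt)
      · rcases le_or_gt (α i') (α i) with hle | hlt2
        · exact invA_ne1 (hA i i' j ⟨hlt, hj, hji, hji', hle⟩)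
        · have h := invB_ne1 (hB i' i (j + 1) ⟨hlt, by omega, by omega,
            by simpa using hji, hlt2⟩)
          simpa using h
    intro i i' j hne hji hji'
    rcases lt_or_gt_of_ne hne with h | h
    · exact key i i' h j hji hji'
    · exact (key i' i h j hji' hji).symm
  · intro i i' j hlt hji' hji
    rcases le_or_gt (α i) (α i') with hle | hgt
    · have h := invA_ne2 (hA i' i (j + 1) ⟨hlt, by omega, by omega, hji, hle⟩)
      simp only [Nat.add_sub_cancel] at h
      exact h.symm
    · have h := invB_ne2 (hB i i' (j + 1) ⟨hlt, by omega, hji, by simpa using hji', hgt⟩)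
      simpa using h

end Paper
end
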